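/- arXiv:2103.02467 — 4 statements merged into one kernel-verified Lean document; each statement's English description precedes it below -/
import Mathlib

section
/- Let $M$ be a $k\times n$ real matrix whose rows are orthonormal. For each $i\in[k]$, suppose $|M_{ij}|\le 5^{-k}\sqrt{p}/C$ for all $j$ outside a fixed set $\mathcal{T}\subseteq[n]$, and suppose there exists $i\in[k]$ with $\sum_{j\in\mathcal{T}^c}|M_{ij}|^2\ge 4^{-k}$. Then for $x$ a random vector with i.i.d. $\operatorname{Ber}(p)$ entries and $r=5^{-k}\sqrt{p}/(3C)$, we have $\mathcal{L}(Mx,r)\le 2^{-k}$, where $C$ is the absolute constant in the Kolmogorov–Lévy–Rogozin inequality. -/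
open scoped BigOperators Matrix Matrix.Norms.L2Operator

attribute [local instance] Classical.propDecidable

/-- Probability, under i.i.d. `Ber(p)` coordinates indexed by `ι` (value `1` with
probability `p`, value `0` with probability `1 - p`), of the event `E`. -/
noncomputable def berProb (p : ℝ) {ι : Type*} [Fintype ι] [DecidableEq ι]
    (E : (ι → ℝ) → Prop) : ℝ :=
  ∑ f : ι → Bool,
    (if E (fun i => if f i then 1 else 0) then ∏ i, (if f i then p else 1 - p) else 0)

/-- Euclidean norm on `N → ℝ`. -/
noncomputable def enorm2 {N : Type*} [Fintype N] (x : N → ℝ) : ℝ :=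
  Real.sqrt (∑ i, (x i) ^ 2)

/-- Lévy concentration function of the `ℝ^N`-valued function `ξ` of i.i.d. `Ber(p)` inputs. -/
noncomputable def levy (p : ℝ) {ι : Type*} [Fintype ι] [DecidableEq ι] {N : Type*} [Fintype N]
    (ξ : (ι → ℝ) → (N → ℝ)) (r : ℝ) : ℝ :=
  ⨆ z : N → ℝ, berProb p (fun v => enorm2 (fun i => ξ v i - z i) ≤ r)

noncomputable def Kker (u : ℝ) : ℝ := ∫ t in (0:ℝ)..2, (1 - t/2) * Real.cos (t*u)

lemma sin_sq_ge {u : ℝ} (h : |u| ≤ 1) : 9/16 * u^2 ≤ Real.sin u ^ 2 := by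
  rcases eq_or_ne u 0 with rfl | hu
  · simp
  · have h1 : 0 < |u| := abs_pos.mpr hu
    have h2 : |u| - |u|^3/4 < Real.sin |u| := lt_of_le_of_lt (by nlinarith [pow_nonneg h1.le 3]) (Real.sin_gt_sub_cube h1)
    have hc1 : |u|^2 ≤ 1 := by nlinarith
    have hc : |u|^3 ≤ |u| := by nlinarith
    have h3 : 3/4 * |u| ≤ Real.sin |u| := by nlinarith
    have h4 : Real.sin |u| ^ 2 = Real.sin u ^ 2 := by
      rcases abs_cases u with ⟨he, _⟩ | ⟨he, _⟩ <;> rw [he] <;> simp [Real.sin_neg]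
    nlinarith [sq_abs u]

lemma one_sub_cos_ge {θ : ℝ} (h : |θ| ≤ 2) : θ^2/8 ≤ 1 - Real.cos θ := by
  have h1 : |θ/2| ≤ 1 := by rw [abs_div]; rw [abs_of_pos (by norm_num : (0:ℝ) < 2)]; linarith [abs_nonneg θ, (abs_le.mp h).1, (abs_le.mp h).2, le_abs_self θ]
  have h2 := sin_sq_ge h1
  have h3 : Real.cos (2*(θ/2)) = Real.cos (θ/2) ^2 - Real.sin (θ/2)^2 := Real.cos_two_mul' _
  rw [show 2*(θ/2) = θ by ring] at h3
  have h4 := Real.sin_sq_add_cos_sq (θ/2)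
  nlinarith

lemma Kker_eq {u : ℝ} (hu : u ≠ 0) : Kker u = Real.sin u ^ 2 / u ^ 2 := by
  have hd : ∀ t ∈ Set.uIcc (0:ℝ) 2,
      HasDerivAt (fun s => (1 - s/2) * Real.sin (s*u) / u - Real.cos (s*u) / (2*u^2))
        ((1 - t/2) * Real.cos (t*u)) t := by
    intro t _
    have h1 : HasDerivAt (fun s : ℝ => 1 - s/2) (-(1/2)) t := by
      simpa using ((hasDerivAt_id t).div_const 2).const_sub 1
    have h2 : HasDerivAt (fun s : ℝ => Real.sin (s*u)) (Real.cos (t*u) * u) t := by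
      simpa [Function.comp_def] using (Real.hasDerivAt_sin (t*u)).comp t ((hasDerivAt_id t).mul_const u)
    have h3 : HasDerivAt (fun s : ℝ => Real.cos (s*u)) (-Real.sin (t*u) * u) t := by
      simpa [Function.comp_def] using (Real.hasDerivAt_cos (t*u)).comp t ((hasDerivAt_id t).mul_const u)
    have h4 := ((h1.mul h2).div_const u).sub (h3.div_const (2*u^2))
    refine h4.congr_deriv ?_
    field_simp
    ring
  unfold Kker
  rw [intervalIntegral.integral_eq_sub_of_hasDerivAt hd
    ((Continuous.intervalIntegrable (by continuity) 0 2))]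
  have h4 := Real.sin_sq_add_cos_sq u
  have h3 : Real.cos (2*u) = Real.cos u ^2 - Real.sin u ^2 := Real.cos_two_mul' _
  simp only [zero_mul, Real.sin_zero, Real.cos_zero]
  rw [show (2:ℝ)*u = 2*u by ring] at h3
  field_simp
  nlinarith [h3]

lemma Kker_zero : Kker 0 = 1 := by
  have : Kker 0 = ∫ t in (0:ℝ)..2, (1 - t/2) := by
    unfold Kker; simp
  rw [this, intervalIntegral.integral_sub intervalIntegrable_const
    ((intervalIntegral.intervalIntegrable_id).div_const 2)]
  simp [intervalIntegral.integral_div]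
  norm_num

lemma Kker_nonneg (u : ℝ) : 0 ≤ Kker u := by
  rcases eq_or_ne u 0 with rfl | hu
  · rw [Kker_zero]; norm_num
  · rw [Kker_eq hu]; positivity

lemma Kker_half {u : ℝ} (h : |u| ≤ 1/3) : 1/2 ≤ Kker u := by
  rcases eq_or_ne u 0 with rfl | hu
  · rw [Kker_zero]; norm_num
  · rw [Kker_eq hu]
    have h2 := sin_sq_ge (le_trans h (by norm_num))
    have hu2 : 0 < u^2 := by positivity
    rw [le_div_iff₀ hu2]
    nlinarith

lemma zfac_abs_sq (p θ : ℝ) :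
    ‖(↑(1-p) : ℂ) + ↑p * Complex.exp (↑θ * Complex.I)‖ ^ 2
      = 1 - 2*p*(1-p)*(1 - Real.cos θ) := by
  have hz : ((↑(1-p) : ℂ) + ↑p * Complex.exp (↑θ * Complex.I))
      = Complex.ofReal (1 - p + p * Real.cos θ) + Complex.ofReal (p * Real.sin θ) * Complex.I := by
    rw [Complex.exp_mul_I, ← Complex.ofReal_cos, ← Complex.ofReal_sin]
    push_cast
    ring
  rw [hz, Complex.sq_norm, Complex.normSq_add_mul_I]
  have h := Real.sin_sq_add_cos_sq θ
  linear_combination p^2 * h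

lemma zfac_le_one {p : ℝ} (hp0 : 0 ≤ p) (hp1 : p ≤ 1) (θ : ℝ) :
    ‖(↑(1-p) : ℂ) + ↑p * Complex.exp (↑θ * Complex.I)‖ ≤ 1 := by
  have h := zfac_abs_sq p θ
  have hn := norm_nonneg ((↑(1-p) : ℂ) + ↑p * Complex.exp (↑θ * Complex.I))
  have h1 : (0:ℝ) ≤ 1 - p := by linarith
  have h2 : (0:ℝ) ≤ 1 - Real.cos θ := by linarith [Real.cos_le_one θ]
  nlinarith [mul_nonneg (mul_nonneg hp0 h1) h2,
    sq_nonneg (‖(↑(1-p) : ℂ) + ↑p * Complex.exp (↑θ * Complex.I)‖ - 1)]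

lemma zfac_le_exp {p : ℝ} (hp0 : 0 ≤ p) (hp1 : p ≤ 1/2) {θ : ℝ} (hθ : |θ| ≤ 2) :
    ‖(↑(1-p) : ℂ) + ↑p * Complex.exp (↑θ * Complex.I)‖
      ≤ Real.exp (-(p * θ^2/16)) := by
  have h := zfac_abs_sq p θ
  have hc := one_sub_cos_ge hθ
  have hn := norm_nonneg ((↑(1-p) : ℂ) + ↑p * Complex.exp (↑θ * Complex.I))
  have he : Real.exp (-(p * θ^2/16)) ^ 2 = Real.exp (-(p*θ^2/8)) := by
    rw [sq, ← Real.exp_add]; ring_nf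
  have hle : 1 - p*θ^2/8 ≤ Real.exp (-(p*θ^2/8)) := by
    have := Real.add_one_le_exp (-(p*θ^2/8)); linarith
  have h2 : ‖(↑(1-p) : ℂ) + ↑p * Complex.exp (↑θ * Complex.I)‖ ^ 2
      ≤ Real.exp (-(p * θ^2/16)) ^ 2 := by
    rw [h, he]
    have h2c : (0:ℝ) ≤ 1 - Real.cos θ := by nlinarith [sq_nonneg θ]
    have e1 : p * (θ^2/8) ≤ p * (1 - Real.cos θ) := mul_le_mul_of_nonneg_left hc hp0
    have e2 : p * (1 - Real.cos θ) ≤ 2*p*(1-p)*(1-Real.cos θ) := by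
      nlinarith [mul_nonneg (mul_nonneg hp0 (by linarith : (0:ℝ) ≤ 1-2*p)) h2c]
    linarith
  nlinarith [Real.exp_pos (-(p * θ^2/16)),
    sq_nonneg (‖(↑(1-p) : ℂ) + ↑p * Complex.exp (↑θ * Complex.I)‖
      - Real.exp (-(p * θ^2/16)))]

lemma char_prod {n : ℕ} (p : ℝ) (a : Fin n → ℝ) (s : ℝ) :
    ∑ f : Fin n → Bool, ((∏ j, (if f j then p else 1-p) : ℝ) : ℂ)
        * Complex.exp (↑(s * ∑ j, a j * (if f j then (1:ℝ) else 0)) * Complex.I)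
      = ∏ j, ((↑(1-p) : ℂ) + ↑p * Complex.exp (↑(s * a j) * Complex.I)) := by
  have key : ∀ f : Fin n → Bool,
      ((∏ j, (if f j then p else 1-p) : ℝ) : ℂ)
        * Complex.exp (↑(s * ∑ j, a j * (if f j then (1:ℝ) else 0)) * Complex.I)
      = ∏ j, (if f j then (↑p : ℂ) * Complex.exp (↑(s * a j) * Complex.I) else (↑(1-p) : ℂ)) := by
    intro f
    have h1 : (↑(s * ∑ j, a j * (if f j then (1:ℝ) else 0)) : ℂ) * Complex.I
        = ∑ j, (↑(s * a j * (if f j then (1:ℝ) else 0)) : ℂ) * Complex.I := by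
      push_cast
      rw [Finset.mul_sum, Finset.sum_mul]
      exact Finset.sum_congr rfl fun j _ => by ring
    rw [h1, Complex.exp_sum]
    push_cast
    rw [← Finset.prod_mul_distrib]
    refine Finset.prod_congr rfl fun j _ => ?_
    by_cases hf : f j <;> simp [hf]
  simp_rw [key]
  rw [← Fintype.prod_sum
    (fun j (b : Bool) => if b then (↑p : ℂ) * Complex.exp (↑(s * a j) * Complex.I) else (↑(1-p) : ℂ))]
  refine Finset.prod_congr rfl fun j _ => ?_
  rw [Fintype.sum_bool]
  simp [add_comm]

open Real in
lemma anticonc {n : ℕ} (p : ℝ) (hp0 : 0 < p) (hp1 : p ≤ 1/2)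
    (a : Fin n → ℝ) (T : Finset (Fin n)) (ε : ℝ) (hε : 0 < ε)
    (ha : ∀ j ∉ T, |a j| ≤ ε) (z₀ : ℝ)
    (hS : 0 < ∑ j ∈ Tᶜ, (a j)^2) :
    ∑ f : Fin n → Bool,
      (if |(∑ j, a j * (if f j then (1:ℝ) else 0)) - z₀| ≤ ε/3
        then ∏ j, (if f j then p else 1-p) else 0)
      ≤ 2 * Real.sqrt (π / (p * (∑ j ∈ Tᶜ, (a j)^2) / (16 * ε^2))) := by
  set Sg : ℝ := ∑ j ∈ Tᶜ, (a j)^2 with hSg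
  set c : ℝ := p * Sg / (16 * ε^2) with hc
  have hcpos : 0 < c := by positivity
  set S : (Fin n → Bool) → ℝ := fun f => ∑ j, a j * (if f j then (1:ℝ) else 0) with hSdef
  set W : (Fin n → Bool) → ℝ := fun f => ∏ j, (if f j then p else 1-p) with hWdef
  have hW0 : ∀ f, 0 ≤ W f := by
    intro f
    refine Finset.prod_nonneg fun j _ => ?_
    by_cases h : f j <;> simp [h] <;> linarith
  set u : (Fin n → Bool) → ℝ := fun f => (S f - z₀)/ε with hudef
  -- Step A
  have stepA : ∑ f : Fin n → Bool,
      (if |S f - z₀| ≤ ε/3 then W f else 0)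
      ≤ ∑ f : Fin n → Bool, 2 * (W f * Kker (u f)) := by
    refine Finset.sum_le_sum fun f _ => ?_
    by_cases h : |S f - z₀| ≤ ε/3
    · rw [if_pos h]
      have h2 : |u f| ≤ 1/3 := by
        show |(S f - z₀)/ε| ≤ 1/3
        rw [abs_div, abs_of_pos hε, div_le_iff₀ hε]
        linarith
      nlinarith [hW0 f, Kker_half h2]
    · rw [if_neg h]
      nlinarith [hW0 f, Kker_nonneg (u f)]
  -- Step B
  have hcont : ∀ f : Fin n → Bool,
      Continuous (fun t : ℝ => W f * ((1 - t/2) * Real.cos (t * u f))) := by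
    intro f; fun_prop
  have stepB : ∑ f : Fin n → Bool, 2 * (W f * Kker (u f))
      = 2 * ∫ t in (0:ℝ)..2, ∑ f : Fin n → Bool, W f * ((1 - t/2) * Real.cos (t * u f)) := by
    rw [← Finset.mul_sum]
    congr 1
    rw [intervalIntegral.integral_finset_sum
      (fun f _ => (hcont f).intervalIntegrable 0 2)]
    refine Finset.sum_congr rfl fun f _ => ?_
    rw [intervalIntegral.integral_const_mul]
    rfl
  -- Step C: pointwise bound on the integrand
  have hfac : ∀ t ∈ Set.Icc (0:ℝ) 2,
      (∑ f : Fin n → Bool, W f * ((1 - t/2) * Real.cos (t * u f)))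
        ≤ Real.exp (-c * t^2) := by
    intro t ht
    obtain ⟨ht0, ht2⟩ := ht
    set Φ : ℂ := ∑ f : Fin n → Bool, ((W f : ℝ) : ℂ) * Complex.exp (↑(t * u f) * Complex.I)
      with hΦ
    have hre : (∑ f : Fin n → Bool, W f * Real.cos (t * u f)) = Φ.re := by
      rw [hΦ, Complex.re_sum]
      exact Finset.sum_congr rfl fun f _ => by
        rw [Complex.re_ofReal_mul, Complex.exp_ofReal_mul_I_re]
    have hΦeq : Φ = Complex.exp (↑(-(t * z₀ / ε)) * Complex.I)
        * ∏ j, ((↑(1-p) : ℂ) + ↑p * Complex.exp (↑((t/ε) * a j) * Complex.I)) := by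
      rw [← char_prod p a (t/ε), Finset.mul_sum, hΦ]
      refine Finset.sum_congr rfl fun f _ => ?_
      rw [show (↑(t * u f) : ℂ) * Complex.I
          = ↑((t/ε) * S f) * Complex.I + ↑(-(t * z₀ / ε)) * Complex.I by
        push_cast
        rw [hudef]
        push_cast
        field_simp
        ring]
      rw [Complex.exp_add]
      ring
    have habs : ‖Φ‖ ≤ Real.exp (-c * t^2) := by
      rw [hΦeq, norm_mul, Complex.norm_exp_ofReal_mul_I, one_mul, norm_prod]
      calc ∏ j, ‖(↑(1-p) : ℂ) + ↑p * Complex.exp (↑((t/ε) * a j) * Complex.I)‖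
          = (∏ j ∈ T, ‖(↑(1-p) : ℂ) + ↑p * Complex.exp (↑((t/ε) * a j) * Complex.I)‖)
            * ∏ j ∈ Tᶜ, ‖(↑(1-p) : ℂ) + ↑p * Complex.exp (↑((t/ε) * a j) * Complex.I)‖ := by
            rw [Finset.prod_mul_prod_compl]
        _ ≤ 1 * ∏ j ∈ Tᶜ, Real.exp (-(p * ((t/ε) * a j)^2/16)) := by
            refine mul_le_mul ?_ ?_ (Finset.prod_nonneg fun j _ => norm_nonneg _) zero_le_one
            · exact Finset.prod_le_one (fun j _ => norm_nonneg _)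
                (fun j _ => zfac_le_one hp0.le (by linarith) _)
            · refine Finset.prod_le_prod (fun j _ => norm_nonneg _) fun j hj => ?_
              refine zfac_le_exp hp0.le hp1 ?_
              have haj : |a j| ≤ ε := ha j (Finset.mem_compl.mp hj)
              rw [abs_mul, abs_div, abs_of_nonneg ht0, abs_of_pos hε]
              calc t/ε * |a j| ≤ t/ε * ε := by
                    refine mul_le_mul_of_nonneg_left haj (by positivity)
                _ = t := by field_simp
                _ ≤ 2 := ht2
        _ = Real.exp (∑ j ∈ Tᶜ, -(p * ((t/ε) * a j)^2/16)) := by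
            rw [one_mul, Real.exp_sum]
        _ = Real.exp (-c * t^2) := by
            congr 1
            have hrw : ∀ j : Fin n, -(p * (t/ε * a j)^2/16)
                = p * a j^2 * (-(t^2) / (16 * ε^2)) := by
              intro j; field_simp
            rw [Finset.sum_congr rfl fun j _ => hrw j, ← Finset.sum_mul, ← Finset.mul_sum,
              hc, hSg]
            field_simp
    have h1 : (∑ f : Fin n → Bool, W f * ((1 - t/2) * Real.cos (t * u f)))
        = (1 - t/2) * ∑ f : Fin n → Bool, W f * Real.cos (t * u f) := by
      rw [Finset.mul_sum]
      exact Finset.sum_congr rfl fun f _ => by ring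
    rw [h1, hre]
    have h2 : Φ.re ≤ ‖Φ‖ := Complex.re_le_norm Φ
    have h3 : 0 ≤ ‖Φ‖ := norm_nonneg _
    nlinarith [Real.exp_pos (-c * t^2)]
  -- Step D: assemble
  have hHcont : Continuous (fun t : ℝ =>
      ∑ f : Fin n → Bool, W f * ((1 - t/2) * Real.cos (t * u f))) := by
    refine continuous_finset_sum _ fun f _ => ?_
    fun_prop
  have stepC : (∫ t in (0:ℝ)..2, ∑ f : Fin n → Bool, W f * ((1 - t/2) * Real.cos (t * u f)))
      ≤ ∫ t in (0:ℝ)..2, Real.exp (-c * t^2) := by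
    refine intervalIntegral.integral_mono_on (by norm_num)
      (hHcont.intervalIntegrable 0 2)
      ((Real.continuous_exp.comp (by fun_prop)).intervalIntegrable 0 2) hfac
  have stepD : (∫ t in (0:ℝ)..2, Real.exp (-c * t^2)) ≤ Real.sqrt (π / c) := by
    rw [← integral_gaussian c]
    rw [intervalIntegral.integral_of_le (by norm_num : (0:ℝ) ≤ 2)]
    exact MeasureTheory.setIntegral_le_integral (integrable_exp_neg_mul_sq hcpos)
      (Filter.Eventually.of_forall fun x => (Real.exp_pos _).le)
  calc ∑ f : Fin n → Bool, (if |S f - z₀| ≤ ε/3 then W f else 0)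
      ≤ ∑ f : Fin n → Bool, 2 * (W f * Kker (u f)) := stepA
    _ = 2 * ∫ t in (0:ℝ)..2, ∑ f : Fin n → Bool, W f * ((1 - t/2) * Real.cos (t * u f)) := stepB
    _ ≤ 2 * Real.sqrt (π / c) := by linarith [stepC, stepD]

/-- Case I of the key lemma, with C the absolute constant from the
Kolmogorov–Lévy–Rogozin inequality. -/
theorem stmt2 :
    ∃ C : ℝ, 0 < C ∧
      ∀ (p : ℝ), p ∈ Set.Ioc (0 : ℝ) (1 / 2) → ∀ (k n : ℕ), 1 ≤ k →
      ∀ (M : Matrix (Fin k) (Fin n) ℝ), M * Mᵀ = 1 →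
      ∀ (T : Finset (Fin n)),
        (∀ i : Fin k, ∀ j ∉ T, |M i j| ≤ (5 : ℝ) ^ (-(k : ℤ)) * Real.sqrt p / C) →
        (∃ i : Fin k, (4 : ℝ) ^ (-(k : ℤ)) ≤ ∑ j ∈ Tᶜ, (M i j) ^ 2) →
        levy p (fun v => M.mulVec v) ((5 : ℝ) ^ (-(k : ℤ)) * Real.sqrt p / (3 * C))
          ≤ (2 : ℝ) ^ (-(k : ℤ)) := by
  refine ⟨100, by norm_num, ?_⟩
  rintro p ⟨hp0, hp1⟩ k n hk M _hM T hT ⟨i, hi⟩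
  have hsp : 0 < Real.sqrt p := Real.sqrt_pos.mpr hp0
  set A : ℝ := (2:ℝ)^k with hA
  set B : ℝ := (5:ℝ)^k with hB
  have hApos : (0:ℝ) < A := by positivity
  have hBpos : (0:ℝ) < B := by positivity
  have h2k : (2:ℝ)^(-(k:ℤ)) = A⁻¹ := by rw [zpow_neg, zpow_natCast, hA]
  have h5k : (5:ℝ)^(-(k:ℤ)) = B⁻¹ := by rw [zpow_neg, zpow_natCast, hB]
  have h4k : (4:ℝ)^(-(k:ℤ)) = (A^2)⁻¹ := by
    rw [zpow_neg, zpow_natCast, hA, ← pow_mul, show (4:ℝ) = 2^2 by norm_num, ← pow_mul,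
      Nat.mul_comm]
  set ε : ℝ := B⁻¹ * Real.sqrt p / 100 with hεdef
  have hεpos : 0 < ε := by positivity
  set Sg : ℝ := ∑ j ∈ Tᶜ, (M i j)^2 with hSgdef
  have hSgpos : 0 < Sg := lt_of_lt_of_le (by positivity) (le_of_le_of_eq hi (by rw [hSgdef]))
  -- the radius equals ε/3
  have hrad : (5 : ℝ) ^ (-(k : ℤ)) * Real.sqrt p / (3 * 100) = ε / 3 := by
    rw [h5k, hεdef]; ring
  rw [levy]
  refine Real.iSup_le (fun z => ?_) (by positivity)
  have key := anticonc p hp0 hp1 (fun j => M i j) T ε hεpos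
    (fun j hj => by
      have := hT i j hj
      rwa [h5k, show B⁻¹ * Real.sqrt p / 100 = ε by rw [hεdef]] at this) (z i)
    (by rw [← hSgdef]; exact hSgpos)
  -- berProb ≤ the sum in `key`
  have mono : berProb p (fun v => enorm2 (fun i' => M.mulVec v i' - z i')
        ≤ (5 : ℝ) ^ (-(k : ℤ)) * Real.sqrt p / (3 * 100))
      ≤ ∑ f : Fin n → Bool,
        (if |(∑ j, M i j * (if f j then (1:ℝ) else 0)) - z i| ≤ ε/3
          then ∏ j, (if f j then p else 1-p) else 0) := by
    rw [berProb]
    refine Finset.sum_le_sum fun f _ => ?_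
    by_cases h : enorm2 (fun i' => M.mulVec (fun j => if f j then (1:ℝ) else 0) i' - z i')
        ≤ (5 : ℝ) ^ (-(k : ℤ)) * Real.sqrt p / (3 * 100)
    · rw [if_pos h]
      have himp : |(∑ j, M i j * (if f j then (1:ℝ) else 0)) - z i| ≤ ε/3 := by
        rw [← hrad]
        calc |(∑ j, M i j * (if f j then (1:ℝ) else 0)) - z i|
            = Real.sqrt (((∑ j, M i j * (if f j then (1:ℝ) else 0)) - z i)^2) := by
              rw [Real.sqrt_sq_eq_abs]
          _ ≤ enorm2 (fun i' => M.mulVec (fun j => if f j then (1:ℝ) else 0) i' - z i') := by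
              rw [enorm2]
              refine Real.sqrt_le_sqrt ?_
              have := Finset.single_le_sum
                (f := fun i' => (M.mulVec (fun j => if f j then (1:ℝ) else 0) i' - z i')^2)
                (fun i' _ => sq_nonneg _) (Finset.mem_univ i)
              exact this
          _ ≤ _ := h
      rw [if_pos himp]
    · rw [if_neg h]
      split
      · exact Finset.prod_nonneg fun j _ => by by_cases hf : f j <;> simp [hf] <;> linarith
      · exact le_rfl
  -- final numeric bound
  have hSg4 : (A^2)⁻¹ ≤ Sg := by rw [← h4k]; exact hi
  have hXeq : Real.pi / (p * Sg / (16 * ε^2)) = Real.pi / (625 * B^2 * Sg) := by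
    rw [hεdef]
    have hq : Real.sqrt p ^ 2 = p := Real.sq_sqrt hp0.le
    field_simp
    ring_nf
    rw [hq]
  have hXle : Real.pi / (625 * B^2 * Sg) ≤ (A⁻¹/2)^2 := by
    have hA2 : (A⁻¹/2)^2 = 1/(4*A^2) := by field_simp; ring
    rw [hA2, div_le_div_iff₀ (by positivity) (by positivity)]
    have hAB : A^2 ≤ B := by
      rw [hA, hB, ← pow_mul, Nat.mul_comm, pow_mul]
      exact pow_le_pow_left₀ (by norm_num) (by norm_num) k
    have hSgA : 1 ≤ A^2 * Sg := by
      rw [← mul_inv_cancel₀ (by positivity : (A^2) ≠ 0)]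
      exact mul_le_mul_of_nonneg_left hSg4 (by positivity)
    have hπ : Real.pi ≤ 4 := Real.pi_le_four
    have hfin : Real.pi * (4*A^2) * A^2 ≤ 1 * (625*B^2*Sg) * A^2 := by
      nlinarith [mul_le_mul_of_nonneg_left hSgA (sq_nonneg B),
        mul_le_mul hAB hAB (by positivity : (0:ℝ) ≤ A^2) (by positivity : (0:ℝ) ≤ B),
        hπ, Real.pi_pos, (by positivity : (0:ℝ) ≤ A^2*A^2)]
    exact le_of_mul_le_mul_right hfin (by positivity)
  have hfinal : 2 * Real.sqrt (Real.pi / (p * Sg / (16 * ε^2))) ≤ (2:ℝ)^(-(k:ℤ)) := by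
    rw [h2k, hXeq]
    have h1 : Real.sqrt (Real.pi / (625 * B^2 * Sg)) ≤ A⁻¹/2 := by
      have := Real.sqrt_le_sqrt hXle
      rwa [Real.sqrt_sq (by positivity)] at this
    linarith
  calc berProb p (fun v => enorm2 (fun i' => M.mulVec v i' - z i')
        ≤ (5 : ℝ) ^ (-(k : ℤ)) * Real.sqrt p / (3 * 100)) ≤ _ := mono
    _ ≤ 2 * Real.sqrt (Real.pi / (p * Sg / (16 * ε^2))) := key
    _ ≤ (2:ℝ)^(-(k:ℤ)) := hfinal
end

section
/- (Restricted invertibility, Gluskin–Olevskii form) Let $U$ be an $n\times m$ real matrix of rank $n$ (so $m\ge n$). Then there exists a subset $\mathcal{S}\subseteq[m]$ of columns with $|\mathcal{S}|=n$ such that $U_{\mathcal{S}}$ is invertible and $\|U_{\mathcal{S}}^{-1}\|_{\operatorname{HS}}^2 \le (m-n+1)\cdot\operatorname{Tr}[(UU^T)^{-1}]$. -/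
open scoped BigOperators Matrix Matrix.Norms.L2Operator

attribute [local instance] Classical.propDecidable

open Matrix Finset
lemma emb_symm_apply {m k : ℕ} (s : Finset (Fin m)) (h : s.card = k) (x : Fin m) (hx : x ∈ s) :
    s.orderEmbOfFin h ((s.orderIsoOfFin h).symm ⟨x, hx⟩) = x := by
  rw [← Finset.coe_orderIsoOfFin_apply, OrderIso.apply_symm_apply]

lemma image_orderEmbOfFin {m k : ℕ} (s : Finset (Fin m)) (h : s.card = k) :
    Finset.image (s.orderEmbOfFin h) Finset.univ = s := by
  apply Finset.eq_of_subset_of_card_le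
  · intro x hx
    simp only [Finset.mem_image] at hx
    obtain ⟨i, _, rfl⟩ := hx
    exact Finset.orderEmbOfFin_mem s h i
  · rw [Finset.card_image_of_injective _ (s.orderEmbOfFin h).injective, Finset.card_univ,
      Fintype.card_fin, h]

lemma card_image_univ {m k : ℕ} {f : Fin k → Fin m} (hf : Function.Injective f) :
    (Finset.image f Finset.univ).card = k := by
  rw [Finset.card_image_of_injective _ hf, Finset.card_univ, Fintype.card_fin]

noncomputable def permOf {m k : ℕ} (f : Fin k → Fin m) (hf : Function.Injective f) :
    Equiv.Perm (Fin k) :=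
  Equiv.ofBijective
    (fun x => ((Finset.image f Finset.univ).orderIsoOfFin (card_image_univ hf)).symm
      ⟨f x, by simp [Finset.mem_image]⟩)
    (Finite.injective_iff_bijective.mp (fun a b hab => by
      have h1 := ((Finset.image f Finset.univ).orderIsoOfFin (card_image_univ hf)).symm.injective hab
      exact hf (congrArg Subtype.val h1)))

lemma permOf_spec {m k : ℕ} (f : Fin k → Fin m) (hf : Function.Injective f) (x : Fin k) :
    (Finset.image f Finset.univ).orderEmbOfFin (card_image_univ hf) (permOf f hf x) = f x := by
  simp only [permOf, Equiv.ofBijective_apply]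
  exact emb_symm_apply _ _ _ _

lemma det_mul_expand' {k m : ℕ} (A : Matrix (Fin k) (Fin m) ℝ) (B : Matrix (Fin m) (Fin k) ℝ) :
    (A * B).det = ∑ f : Fin k → Fin m, (∏ i, A i (f i)) * (B.submatrix f id).det := by
  have h : (A * B).det = Matrix.detRowAlternating (fun i : Fin k => ∑ j : Fin m, A i j • B j) := by
    congr 1
    ext i j
    simp [Matrix.mul_apply]
  rw [h]
  rw [show (Matrix.detRowAlternating (fun i : Fin k => ∑ j : Fin m, A i j • B j) : ℝ)
      = Matrix.detRowAlternating.toMultilinearMap (fun i : Fin k => ∑ j : Fin m, A i j • B j) from rfl]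
  rw [MultilinearMap.map_sum]
  refine Finset.sum_congr rfl fun f _ => ?_
  have := (Matrix.detRowAlternating (R := ℝ) (n := Fin k)).toMultilinearMap.map_smul_univ
    (fun i => A i (f i)) (fun i => B (f i))
  simp only [this, smul_eq_mul]
  rfl

lemma cauchy_binet {k m : ℕ} (A : Matrix (Fin k) (Fin m) ℝ) (B : Matrix (Fin m) (Fin k) ℝ) :
    (A * B).det = ∑ s : {s : Finset (Fin m) // s.card = k},
      (A.submatrix id (s.1.orderEmbOfFin s.2)).det * (B.submatrix (s.1.orderEmbOfFin s.2) id).det := by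
  rw [det_mul_expand']
  have hz : ∀ f : Fin k → Fin m, ¬ Function.Injective f → (B.submatrix f id).det = 0 := by
    intro f hf
    rw [Function.not_injective_iff] at hf
    obtain ⟨i, j, hij, hne⟩ := hf
    exact Matrix.det_zero_of_row_eq hne (by ext x; simp [Matrix.submatrix_apply, hij])
  have hfilter : (∑ f : Fin k → Fin m, (∏ i, A i (f i)) * (B.submatrix f id).det)
      = ∑ f ∈ Finset.univ.filter (fun f : Fin k → Fin m => Function.Injective f),
          (∏ i, A i (f i)) * (B.submatrix f id).det := by
    refine (Finset.sum_filter_of_ne fun f _ hne => ?_).symm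
    by_contra hinj
    exact hne (by rw [hz f hinj, mul_zero])
  rw [hfilter]
  have hdetA : ∀ s : {s : Finset (Fin m) // s.card = k},
      (A.submatrix id (s.1.orderEmbOfFin s.2)).det
      = ∑ σ : Equiv.Perm (Fin k),
          ((Equiv.Perm.sign σ : ℤ) : ℝ) * ∏ i, A i (s.1.orderEmbOfFin s.2 (σ i)) := by
    intro s
    rw [← Matrix.det_transpose, Matrix.det_apply']
    rfl
  simp_rw [hdetA, Finset.sum_mul]
  rw [← Fintype.sum_prod_type']
  refine Finset.sum_bij'
    (i := fun (f : Fin k → Fin m) hf =>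
      ((⟨Finset.image f Finset.univ, card_image_univ (Finset.mem_filter.mp hf).2⟩,
        permOf f (Finset.mem_filter.mp hf).2) :
        {s : Finset (Fin m) // s.card = k} × Equiv.Perm (Fin k)))
    (j := fun p _ => fun x => p.1.1.orderEmbOfFin p.1.2 (p.2 x))
    (fun f hf => Finset.mem_univ _)
    (fun p _ => by
      simp only [Finset.mem_filter, Finset.mem_univ, true_and]
      exact (p.1.1.orderEmbOfFin p.1.2).injective.comp p.2.injective)
    ?_ ?_ ?_
  · -- j (i f) = f
    intro f hf
    have hinj : Function.Injective f := (Finset.mem_filter.mp hf).2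
    funext x
    exact permOf_spec f hinj x
  · -- i (j p) = p
    intro p _
    obtain ⟨⟨s, hs⟩, σ⟩ := p
    have hinj : Function.Injective (fun x => s.orderEmbOfFin hs (σ x)) :=
      (s.orderEmbOfFin hs).injective.comp σ.injective
    have himg : Finset.image (fun x => s.orderEmbOfFin hs (σ x)) Finset.univ = s := by
      rw [show (fun x => s.orderEmbOfFin hs (σ x)) = (s.orderEmbOfFin hs) ∘ (⇑σ) from rfl,
        ← Finset.image_image, Finset.image_univ_equiv]
      exact image_orderEmbOfFin s hs
    refine Prod.ext (Subtype.ext himg) (Equiv.ext fun x => ?_)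
    · -- permOf of composed = σ
      have h1 := permOf_spec (fun x => s.orderEmbOfFin hs (σ x)) hinj x
      -- rewrite the image finset
      have h2 : (Finset.image (fun x => s.orderEmbOfFin hs (σ x)) Finset.univ).orderEmbOfFin
          (card_image_univ hinj) = s.orderEmbOfFin hs := by
        congr 1
      rw [h2] at h1
      exact (s.orderEmbOfFin hs).injective h1
  · -- term equality
    intro f hf
    have hinj : Function.Injective f := (Finset.mem_filter.mp hf).2
    set s := Finset.image f Finset.univ with hsdef
    have hs : s.card = k := card_image_univ hinj
    set σ := permOf f hinj
    have hfe : f = fun x => s.orderEmbOfFin hs (σ x) := by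
      funext x; exact (permOf_spec f hinj x).symm
    have hsub : B.submatrix f id
        = (B.submatrix (s.orderEmbOfFin hs) id).submatrix σ id := by
      rw [Matrix.submatrix_submatrix]
      rw [hfe]; rfl
    rw [hsub, Matrix.det_permute]
    rw [show ∏ i, A i (f i) = ∏ i, A i (s.orderEmbOfFin hs (σ i)) by rw [hfe]]
    push_cast
    ring


lemma card_erase_emb {m N : ℕ} (s : Finset (Fin m)) (hs : s.card = N + 1) (i : Fin (N + 1)) :
    (s.erase (s.orderEmbOfFin hs i)).card = N := by
  rw [Finset.card_erase_of_mem (Finset.orderEmbOfFin_mem s hs i), hs]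
  omega

lemma sum_erase_count {m N : ℕ} (hmN : N ≤ m) (F : Finset (Fin m) → ℝ) :
    ∑ s : {s : Finset (Fin m) // s.card = N + 1}, ∑ i : Fin (N + 1),
        F (s.1.erase (s.1.orderEmbOfFin s.2 i))
      = ∑ t : {t : Finset (Fin m) // t.card = N}, ((m : ℝ) - N) * F t.1 := by
  have hRHS : ∀ t : {t : Finset (Fin m) // t.card = N},
      ((m : ℝ) - N) * F t.1 = ∑ c : Fin m, if c ∈ (t.1)ᶜ then F t.1 else 0 := by
    intro t
    rw [Finset.sum_ite_mem, Finset.univ_inter, Finset.sum_const, Finset.card_compl, t.2,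
      Fintype.card_fin, nsmul_eq_mul, Nat.cast_sub hmN]
  simp_rw [hRHS]
  rw [← Fintype.sum_prod_type', ← Fintype.sum_prod_type']
  simp_rw [← Finset.sum_filter (s := (Finset.univ : Finset ({t : Finset (Fin m) // t.card = N} × Fin m)))
      (p := fun q => q.2 ∈ (q.1.1)ᶜ) (f := fun q => F q.1.1)]
  refine Finset.sum_bij'
    (i := fun (p : {s : Finset (Fin m) // s.card = N + 1} × Fin (N + 1)) _ =>
      ((⟨p.1.1.erase (p.1.1.orderEmbOfFin p.1.2 p.2), card_erase_emb _ _ _⟩,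
        p.1.1.orderEmbOfFin p.1.2 p.2) : {t : Finset (Fin m) // t.card = N} × Fin m))
    (j := fun (q : {t : Finset (Fin m) // t.card = N} × Fin m) hq =>
      ((⟨insert q.2 q.1.1, by
          rw [Finset.card_insert_of_notMem, q.1.2]
          have := (Finset.mem_filter.mp hq).2
          simpa using this⟩,
        ((insert q.2 q.1.1).orderIsoOfFin (by
          rw [Finset.card_insert_of_notMem, q.1.2]
          have := (Finset.mem_filter.mp hq).2
          simpa using this)).symm ⟨q.2, Finset.mem_insert_self _ _⟩) :
        {s : Finset (Fin m) // s.card = N + 1} × Fin (N + 1)))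
    (fun p _ => by
      simp only [Finset.mem_filter, Finset.mem_univ, true_and, Finset.mem_compl]
      exact Finset.notMem_erase _ _)
    (fun q hq => Finset.mem_univ _)
    ?_ ?_ ?_
  · -- j (i p) = p
    rintro ⟨⟨s, hs⟩, idx⟩ _
    have hmem : s.orderEmbOfFin hs idx ∈ s := Finset.orderEmbOfFin_mem s hs idx
    have h1 : insert (s.orderEmbOfFin hs idx) (s.erase (s.orderEmbOfFin hs idx)) = s :=
      Finset.insert_erase hmem
    refine Prod.ext (Subtype.ext h1) ?_
    -- second component: index recovery
    have h2 : ∀ (h' : (insert (s.orderEmbOfFin hs idx) (s.erase (s.orderEmbOfFin hs idx))).card = N + 1),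
        (insert (s.orderEmbOfFin hs idx) (s.erase (s.orderEmbOfFin hs idx))).orderEmbOfFin h'
          = s.orderEmbOfFin hs := by
      intro h'; congr 1
    have h' : (insert (s.orderEmbOfFin hs idx) (s.erase (s.orderEmbOfFin hs idx))).card = N + 1 := by
      rw [h1, hs]
    have key := emb_symm_apply (insert (s.orderEmbOfFin hs idx) (s.erase (s.orderEmbOfFin hs idx)))
      h' (s.orderEmbOfFin hs idx) (Finset.mem_insert_self _ _)
    rw [h2 h'] at key
    exact (s.orderEmbOfFin hs).injective key
  · -- i (j q) = q
    rintro ⟨⟨t, ht⟩, c⟩ hq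
    have hc : c ∉ t := by
      have := (Finset.mem_filter.mp hq).2
      simpa using this
    have hcard : (insert c t).card = N + 1 := by rw [Finset.card_insert_of_notMem hc, ht]
    have hemb : (insert c t).orderEmbOfFin hcard
        (((insert c t).orderIsoOfFin hcard).symm ⟨c, Finset.mem_insert_self _ _⟩) = c :=
      emb_symm_apply _ _ _ _
    refine Prod.ext (Subtype.ext ?_) ?_
    · show Finset.erase (insert c t) _ = t
      rw [show ((⟨insert c t, hcard⟩ : {s : Finset (Fin m) // s.card = N + 1}).1.orderEmbOfFin _ _) = c
        from hemb]
      exact Finset.erase_insert hc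
    · show ((⟨insert c t, hcard⟩ : {s : Finset (Fin m) // s.card = N + 1}).1.orderEmbOfFin _ _) = c
      exact hemb
  · -- summand equality
    rintro ⟨⟨s, hs⟩, idx⟩ _
    rfl

lemma cb_sq {k m : ℕ} (V : Matrix (Fin k) (Fin m) ℝ) :
    (V * Vᵀ).det = ∑ s : {s : Finset (Fin m) // s.card = k},
      (V.submatrix id (s.1.orderEmbOfFin s.2)).det ^ 2 := by
  rw [cauchy_binet]
  refine Finset.sum_congr rfl fun s _ => ?_
  have h : (Vᵀ).submatrix (s.1.orderEmbOfFin s.2) id = (V.submatrix id (s.1.orderEmbOfFin s.2))ᵀ := by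
    ext i j; rfl
  rw [h, Matrix.det_transpose, sq]

lemma emb_erase {m N : ℕ} (s : Finset (Fin m)) (hs : s.card = N + 1) (i : Fin (N + 1)) :
    (fun x : Fin N => s.orderEmbOfFin hs (i.succAbove x))
      = (s.erase (s.orderEmbOfFin hs i)).orderEmbOfFin (card_erase_emb s hs i) := by
  refine Finset.orderEmbOfFin_unique _ (fun x => ?_) ?_
  · rw [Finset.mem_erase]
    exact ⟨fun h => (Fin.succAbove_ne i x) ((s.orderEmbOfFin hs).injective h),
      Finset.orderEmbOfFin_mem _ _ _⟩
  · exact (s.orderEmbOfFin hs).strictMono.comp (Fin.strictMono_succAbove i)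

noncomputable def Gfun {N m : ℕ} (U : Matrix (Fin (N + 1)) (Fin m) ℝ) (j : Fin (N + 1))
    (t : Finset (Fin m)) : ℝ :=
  if h : t.card = N then
    (((U.submatrix (Fin.succAbove j) id)).submatrix id (t.orderEmbOfFin h)).det ^ 2 else 0

lemma Gfun_nonneg {N m : ℕ} (U : Matrix (Fin (N + 1)) (Fin m) ℝ) (j : Fin (N + 1))
    (t : Finset (Fin m)) : 0 ≤ Gfun U j t := by
  unfold Gfun
  split
  · positivity
  · exact le_rfl

lemma adj_sq_eq {N m : ℕ} (U : Matrix (Fin (N + 1)) (Fin m) ℝ)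
    (s : {s : Finset (Fin m) // s.card = N + 1}) :
    ∑ i, ∑ j, ((U.submatrix id (s.1.orderEmbOfFin s.2)).adjugate i j) ^ 2
      = ∑ j, ∑ i, Gfun U j (s.1.erase (s.1.orderEmbOfFin s.2 i)) := by
  rw [Finset.sum_comm]
  refine Finset.sum_congr rfl fun j _ => Finset.sum_congr rfl fun i _ => ?_
  rw [Matrix.adjugate_fin_succ_eq_det_submatrix]
  have hsub : (U.submatrix id (s.1.orderEmbOfFin s.2)).submatrix (Fin.succAbove j) (Fin.succAbove i)
      = (U.submatrix (Fin.succAbove j) id).submatrix id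
          ((s.1.erase (s.1.orderEmbOfFin s.2 i)).orderEmbOfFin (card_erase_emb s.1 s.2 i)) := by
    rw [Matrix.submatrix_submatrix, Matrix.submatrix_submatrix]
    ext x y
    simp only [Matrix.submatrix_apply, Function.comp_apply, id_eq]
    exact congrArg (U (j.succAbove x)) (congrFun (emb_erase s.1 s.2 i) y)
  rw [hsub, Gfun, dif_pos (card_erase_emb s.1 s.2 i)]
  rw [mul_pow, ← pow_mul, mul_comm ((j : ℕ) + i) 2, pow_mul, neg_one_sq, one_pow, one_mul]

lemma trace_adj_eq {N m : ℕ} (U : Matrix (Fin (N + 1)) (Fin m) ℝ) :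
    (U * Uᵀ).adjugate.trace = ∑ j, ∑ t : {t : Finset (Fin m) // t.card = N}, Gfun U j t.1 := by
  rw [Matrix.trace]
  refine Finset.sum_congr rfl fun j _ => ?_
  rw [Matrix.diag_apply, Matrix.adjugate_fin_succ_eq_det_submatrix]
  rw [Even.neg_one_pow ⟨(j : ℕ), rfl⟩, one_mul]
  have hsub : (U * Uᵀ).submatrix (Fin.succAbove j) (Fin.succAbove j)
      = (U.submatrix (Fin.succAbove j) id) * (U.submatrix (Fin.succAbove j) id)ᵀ := by
    ext a b
    simp [Matrix.mul_apply, Matrix.submatrix_apply, Matrix.transpose_apply]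
  rw [hsub, cb_sq]
  refine Finset.sum_congr rfl fun t _ => ?_
  rw [Gfun, dif_pos t.2]

lemma sum_adj_sq_eq {N m : ℕ} (hmN : N + 1 ≤ m) (U : Matrix (Fin (N + 1)) (Fin m) ℝ) :
    ∑ s : {s : Finset (Fin m) // s.card = N + 1},
        ∑ i, ∑ j, ((U.submatrix id (s.1.orderEmbOfFin s.2)).adjugate i j) ^ 2
      = ((m : ℝ) - N) * (U * Uᵀ).adjugate.trace := by
  simp_rw [adj_sq_eq]
  rw [Finset.sum_comm]
  rw [show ∑ j, ∑ s : {s : Finset (Fin m) // s.card = N + 1}, ∑ i,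
        Gfun U j (s.1.erase (s.1.orderEmbOfFin s.2 i))
      = ∑ j : Fin (N + 1), ∑ t : {t : Finset (Fin m) // t.card = N}, ((m : ℝ) - N) * Gfun U j t.1
    from Finset.sum_congr rfl fun j _ => sum_erase_count (by omega) (Gfun U j)]
  rw [trace_adj_eq, Finset.mul_sum]
  exact Finset.sum_congr rfl fun j _ => (Finset.mul_sum _ _ _).symm

lemma key_adj_bound {k : ℕ} (M : Matrix (Fin k) (Fin k) ℝ) :
    M.det ^ 2 * (∑ i, ∑ j, (M⁻¹ i j) ^ 2) ≤ ∑ i, ∑ j, (M.adjugate i j) ^ 2 := by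
  by_cases hdet : M.det = 0
  · rw [hdet]
    norm_num
    positivity
  · have hinv : ∀ i j, M⁻¹ i j = (M.det)⁻¹ * M.adjugate i j := by
      intro i j
      rw [Matrix.inv_def, Matrix.smul_apply, Ring.inverse_eq_inv, smul_eq_mul]
    have hx : ∑ i, ∑ j, (M⁻¹ i j) ^ 2 = (M.det ^ 2)⁻¹ * ∑ i, ∑ j, (M.adjugate i j) ^ 2 := by
      simp only [hinv, mul_pow, ← Finset.mul_sum, inv_pow]
    rw [hx, ← mul_assoc, mul_inv_cancel₀ (pow_ne_zero 2 hdet), one_mul]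

lemma avg_lemma {α : Type*} [Fintype α] (w x : α → ℝ) (C : ℝ) (hw : ∀ s, 0 ≤ w s)
    (hsum : ∑ s, w s * x s ≤ C * ∑ s, w s) (hne : ∑ s, w s ≠ 0) :
    ∃ s, w s ≠ 0 ∧ x s ≤ C := by
  by_contra hcon
  push_neg at hcon
  obtain ⟨s₀, _, hs₀⟩ := Finset.exists_ne_zero_of_sum_ne_zero hne
  have hlt : C * ∑ s, w s < ∑ s, w s * x s := by
    rw [Finset.mul_sum]
    refine Finset.sum_lt_sum (fun s _ => ?_) ⟨s₀, Finset.mem_univ _, ?_⟩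
    · by_cases h : w s = 0
      · rw [h]; simp
      · have hpos := lt_of_le_of_ne (hw s) (Ne.symm h)
        nlinarith [hcon s h]
    · have hpos := lt_of_le_of_ne (hw s₀) (Ne.symm hs₀)
      nlinarith [hcon s₀ hs₀]
  linarith

/-- restricted invertibility (Gluskin–Olevskii). -/
theorem stmt4 (n m : ℕ) (U : Matrix (Fin n) (Fin m) ℝ) (hrank : U.rank = n) :
    ∃ g : Fin n → Fin m, Function.Injective g ∧
      IsUnit (U.submatrix id g) ∧
      ∑ i, ∑ j, ((U.submatrix id g)⁻¹ i j) ^ 2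
        ≤ ((m : ℝ) - n + 1) * (U * Uᵀ)⁻¹.trace := by
  obtain _ | N := n
  · refine ⟨fun i => i.elim0, fun i => i.elim0, ?_, ?_⟩
    · rw [Matrix.isUnit_iff_isUnit_det, Matrix.det_isEmpty]; exact isUnit_one
    · simp [Matrix.trace]
  have hmN : N + 1 ≤ m := by
    have := Matrix.rank_le_width U
    omega
  have hD0 : (U * Uᵀ).det ≠ 0 := by
    intro hdet
    obtain ⟨v, hv, hv0⟩ := Matrix.exists_mulVec_eq_zero_iff.mpr hdet
    have hrk : (U * Uᵀ).rank = N + 1 := by rw [Matrix.rank_self_mul_transpose, hrank]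
    have hker : v ∈ LinearMap.ker (U * Uᵀ).mulVecLin := by
      rw [LinearMap.mem_ker, Matrix.mulVecLin_apply]
      exact hv0
    have hpos : 0 < Module.finrank ℝ (LinearMap.ker (U * Uᵀ).mulVecLin) := by
      rw [Module.finrank_pos_iff_exists_ne_zero]
      exact ⟨⟨v, hker⟩, fun h => hv (by simpa using congrArg Subtype.val h)⟩
    have hrn := LinearMap.finrank_range_add_finrank_ker (U * Uᵀ).mulVecLin
    have hfr : Module.finrank ℝ (Fin (N + 1) → ℝ) = N + 1 := by simp
    rw [hfr] at hrn
    have hrr : (U * Uᵀ).rank = Module.finrank ℝ (LinearMap.range (U * Uᵀ).mulVecLin) := rfl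
    rw [hrr] at hrk
    omega
  have hWD : (U * Uᵀ).det = ∑ s : {s : Finset (Fin m) // s.card = N + 1},
      (U.submatrix id (s.1.orderEmbOfFin s.2)).det ^ 2 := cb_sq U
  have hDpos : 0 < (U * Uᵀ).det := lt_of_le_of_ne (by rw [hWD]; positivity) (Ne.symm hD0)
  have htr : (U * Uᵀ)⁻¹.trace = ((U * Uᵀ).det)⁻¹ * (U * Uᵀ).adjugate.trace := by
    rw [Matrix.inv_def, Matrix.trace_smul, Ring.inverse_eq_inv, smul_eq_mul]
  have hTnn : 0 ≤ (U * Uᵀ).adjugate.trace := by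
    rw [trace_adj_eq]
    refine Finset.sum_nonneg fun j _ => Finset.sum_nonneg fun t _ => Gfun_nonneg U j t.1
  have hsum : ∑ s : {s : Finset (Fin m) // s.card = N + 1},
        (U.submatrix id (s.1.orderEmbOfFin s.2)).det ^ 2 *
          (∑ i, ∑ j, ((U.submatrix id (s.1.orderEmbOfFin s.2))⁻¹ i j) ^ 2)
      ≤ ((m : ℝ) - N) * (U * Uᵀ).adjugate.trace := by
    calc ∑ s : {s : Finset (Fin m) // s.card = N + 1},
          (U.submatrix id (s.1.orderEmbOfFin s.2)).det ^ 2 *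
            (∑ i, ∑ j, ((U.submatrix id (s.1.orderEmbOfFin s.2))⁻¹ i j) ^ 2)
        ≤ ∑ s : {s : Finset (Fin m) // s.card = N + 1},
            ∑ i, ∑ j, ((U.submatrix id (s.1.orderEmbOfFin s.2)).adjugate i j) ^ 2 :=
          Finset.sum_le_sum fun s _ => key_adj_bound _
      _ = ((m : ℝ) - N) * (U * Uᵀ).adjugate.trace := sum_adj_sq_eq hmN U
  obtain ⟨s, hws, hxs⟩ := avg_lemma
    (fun s : {s : Finset (Fin m) // s.card = N + 1} =>
      (U.submatrix id (s.1.orderEmbOfFin s.2)).det ^ 2)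
    (fun s => ∑ i, ∑ j, ((U.submatrix id (s.1.orderEmbOfFin s.2))⁻¹ i j) ^ 2)
    (((m : ℝ) - N) * (((U * Uᵀ).det)⁻¹ * (U * Uᵀ).adjugate.trace))
    (fun s => by positivity)
    (by
      rw [← hWD]
      calc _ ≤ ((m : ℝ) - N) * (U * Uᵀ).adjugate.trace := hsum
        _ = ((m : ℝ) - N) * (((U * Uᵀ).det)⁻¹ * (U * Uᵀ).adjugate.trace) * (U * Uᵀ).det := by
            field_simp)
    (by rw [← hWD]; exact hD0)
  refine ⟨(s.1.orderEmbOfFin s.2), (s.1.orderEmbOfFin s.2).injective, ?_, ?_⟩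
  · rw [Matrix.isUnit_iff_isUnit_det]
    refine isUnit_iff_ne_zero.mpr (fun h => hws ?_)
    simp only [h]
    norm_num
  · have hcast : ((m : ℝ) - ((N + 1 : ℕ) : ℝ) + 1) = (m : ℝ) - N := by push_cast; ring
    rw [hcast, htr]
    exact hxs
end

section
/- Fix $p\in(0,1/2]$ and $k\ge 1$. There exists $\theta=\theta(p,k)>0$ (one may take $\theta=\sqrt{p}/(5Ck5^k)$ for an absolute constant $C$) such that for every $k\times n$ real matrix $M$ with orthonormal rows and $x$ an $n$-dimensional random vector with independent $\operatorname{Ber}(p)$ components, $\mathcal{L}(Mx,\theta)\le(1-p)^k$. -/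
open scoped BigOperators Matrix Matrix.Norms.L2Operator

attribute [local instance] Classical.propDecidable

section kernel

lemma cos_lb {x : ℝ} (hx : |x| ≤ 1) : (2/5 : ℝ) ≤ Real.cos x := by
  have h := Real.cos_bound hx
  have h2 : x^2 ≤ 1 := by nlinarith [abs_nonneg x, sq_abs x]
  have h4 : |x|^4 ≤ 1 := by
    have e : |x|^4 = (|x|^2)^2 := by ring
    rw [e, sq_abs]; nlinarith
  have := abs_sub_le_iff.1 h
  nlinarith [this.2]

lemma one_sub_cos_lb {x : ℝ} (hx : |x| ≤ 1) : (2/5 : ℝ) * x^2 ≤ 1 - Real.cos x := by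
  have h := Real.cos_bound hx
  have h2 : x^2 ≤ 1 := by nlinarith [abs_nonneg x, sq_abs x]
  have h4 : |x|^4 ≤ x^2 := by
    have e : |x|^4 = (x^2)^2 := by rw [← sq_abs x]; ring
    nlinarith
  have := abs_sub_le_iff.1 h
  nlinarith [this.1]

lemma deriv_aux {T y : ℝ} (hT : T ≠ 0) (hy : y ≠ 0) (t : ℝ) :
    HasDerivAt (fun t => (1 - t/T) * (Real.sin (t*y)/y) - Real.cos (t*y)/(T*y^2))
      ((1 - t/T) * Real.cos (t*y)) t := by
  have h1 : HasDerivAt (fun t : ℝ => t * y) y t := by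
    simpa using (hasDerivAt_id t).mul_const y
  have hsin : HasDerivAt (fun t => Real.sin (t*y)) (Real.cos (t*y) * y) t :=
    by have := (Real.hasDerivAt_sin (t*y)).comp t h1; exact this
  have hcos : HasDerivAt (fun t => Real.cos (t*y)) (-Real.sin (t*y) * y) t :=
    by have := (Real.hasDerivAt_cos (t*y)).comp t h1; exact this
  have hlin : HasDerivAt (fun t : ℝ => 1 - t/T) (-(1/T)) t := by
    exact ((hasDerivAt_const t (1:ℝ)).sub ((hasDerivAt_id t).div_const T)).congr_deriv (by ring)
  have H := (hlin.mul (hsin.div_const y)).sub (hcos.div_const (T*y^2))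
  refine H.congr_deriv ?_
  field_simp
  ring

lemma half_int {T y : ℝ} (hT : 0 < T) (hy : y ≠ 0) :
    ∫ t in (0:ℝ)..T, (1 - t/T) * Real.cos (t*y) = (1 - Real.cos (T*y))/(T*y^2) := by
  rw [intervalIntegral.integral_eq_sub_of_hasDerivAt (fun t _ => deriv_aux hT.ne' hy t)
    (by apply Continuous.intervalIntegrable; fun_prop)]
  have hTy : T * y ^ 2 ≠ 0 := by positivity
  field_simp
  simp only [mul_zero, Real.sin_zero, Real.cos_zero]; ring

lemma neg_half_eq {T y : ℝ} (hT : 0 < T) :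
    ∫ t in (-T)..(0:ℝ), (1 - |t|/T) * Real.cos (t*y)
      = ∫ t in (0:ℝ)..T, (1 - t/T) * Real.cos (t*y) := by
  have h1 : ∫ t in (-T)..(0:ℝ), (1 - |t|/T) * Real.cos (t*y)
      = ∫ t in (-T)..(0:ℝ), (1 + t/T) * Real.cos (t*y) := by
    apply intervalIntegral.integral_congr
    intro t ht
    rw [Set.uIcc_of_le (by linarith)] at ht
    have habs : |t| = -t := abs_of_nonpos ht.2
    show (1 - |t|/T) * Real.cos (t*y) = (1 + t/T) * Real.cos (t*y)
    rw [habs]; ring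
  rw [h1]
  have h2 := intervalIntegral.integral_comp_neg (a := (0:ℝ)) (b := T)
      (fun t => (1 + t/T) * Real.cos (t*y))
  simp only [neg_zero] at h2
  rw [← h2]
  apply intervalIntegral.integral_congr
  intro t ht
  show (1 + -t/T) * Real.cos (-t*y) = (1 - t/T) * Real.cos (t*y)
  rw [show -t*y = -(t*y) by ring, Real.cos_neg]
  ring

end kernel

section kernel2

lemma pos_half_abs {T y : ℝ} (hT : 0 < T) :
    ∫ t in (0:ℝ)..T, (1 - |t|/T) * Real.cos (t*y)
      = ∫ t in (0:ℝ)..T, (1 - t/T) * Real.cos (t*y) := by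
  apply intervalIntegral.integral_congr
  intro t ht
  rw [Set.uIcc_of_le (by linarith)] at ht
  show (1 - |t|/T) * Real.cos (t*y) = (1 - t/T) * Real.cos (t*y)
  rw [abs_of_nonneg ht.1]

lemma kernel_split {T : ℝ} (hT : 0 < T) (y : ℝ) :
    ∫ t in (-T)..T, (1 - |t|/T) * Real.cos (t*y)
      = 2 * ∫ t in (0:ℝ)..T, (1 - t/T) * Real.cos (t*y) := by
  have hsplit := intervalIntegral.integral_add_adjacent_intervals
    (a := -T) (b := (0:ℝ)) (c := T) (f := fun t => (1 - |t|/T) * Real.cos (t*y))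
    (μ := MeasureTheory.volume)
    (by apply Continuous.intervalIntegrable; fun_prop)
    (by apply Continuous.intervalIntegrable; fun_prop)
  rw [← hsplit, neg_half_eq hT, pos_half_abs hT]
  ring

lemma kernel_nonneg {T : ℝ} (hT : 0 < T) (y : ℝ) :
    0 ≤ ∫ t in (-T)..T, (1 - |t|/T) * Real.cos (t*y) := by
  rw [kernel_split hT]
  rcases eq_or_ne y 0 with rfl | hy
  · have : 0 ≤ ∫ t in (0:ℝ)..T, (1 - t/T) * Real.cos (t*0) := by
      apply intervalIntegral.integral_nonneg (by linarith)
      intro t ht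
      have : t/T ≤ 1 := by rw [div_le_one hT]; exact ht.2
      simp only [mul_zero, Real.cos_zero, mul_one]
      linarith
    linarith
  · rw [half_int hT hy]
    have h1 : Real.cos (T*y) ≤ 1 := Real.cos_le_one _
    have h2 : (0:ℝ) < T * y^2 := by positivity
    have h3 : (0:ℝ) ≤ 1 - Real.cos (T*y) := by linarith
    positivity

lemma kernel_mass {T : ℝ} (hT : 0 < T) :
    ∫ t in (0:ℝ)..T, (1 - t/T) = T/2 := by
  have h1 : ∫ t in (0:ℝ)..T, (1 - t/T)
      = (∫ t in (0:ℝ)..T, (1:ℝ)) - (∫ t in (0:ℝ)..T, t)/T := by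
    rw [← intervalIntegral.integral_div]
    exact intervalIntegral.integral_sub (by apply Continuous.intervalIntegrable; fun_prop)
      (by apply Continuous.intervalIntegrable; fun_prop)
  rw [h1, intervalIntegral.integral_const, integral_id]
  simp [smul_eq_mul]
  field_simp
  ring

lemma kernel_lb {T y : ℝ} (hT : 0 < T) (hy : |y| * T ≤ 1) :
    (2/5) * T ≤ ∫ t in (-T)..T, (1 - |t|/T) * Real.cos (t*y) := by
  rw [kernel_split hT]
  have hm : ∫ t in (0:ℝ)..T, (2/5 : ℝ) * (1 - t/T) = (2/5) * (T/2) := by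
    rw [intervalIntegral.integral_const_mul, kernel_mass hT]
  have hmono : ∫ t in (0:ℝ)..T, (2/5 : ℝ) * (1 - t/T)
      ≤ ∫ t in (0:ℝ)..T, (1 - t/T) * Real.cos (t*y) := by
    apply intervalIntegral.integral_mono_on hT.le
      (by apply Continuous.intervalIntegrable; fun_prop)
      (by apply Continuous.intervalIntegrable; fun_prop)
    intro t ht
    have h1 : 0 ≤ 1 - t/T := by
      have : t/T ≤ 1 := by rw [div_le_one hT]; exact ht.2
      linarith
    have h2 : (2/5:ℝ) ≤ Real.cos (t*y) := by
      apply cos_lb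
      rw [abs_mul]
      calc |t| * |y| ≤ T * |y| := by
            apply mul_le_mul_of_nonneg_right _ (abs_nonneg y)
            rw [abs_of_nonneg ht.1]; exact ht.2
        _ ≤ 1 := by rw [mul_comm]; exact hy
    nlinarith
  linarith

end kernel2

section charfn
attribute [local instance] Classical.propDecidable

lemma sum_prod_bool' {ι β : Type*} [Fintype ι] [DecidableEq ι] [CommSemiring β]
    (g : ι → Bool → β) :
    ∑ f : ι → Bool, ∏ i, g i (f i) = ∏ i, (g i true + g i false) := by
  have h1 : ∀ i, g i true + g i false = ∑ b : Bool, g i b := by simp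
  simp_rw [h1]
  rw [Finset.prod_univ_sum, Fintype.piFinset_univ]

lemma factor_abs {p : ℝ} (hp0 : 0 ≤ p) (hp1 : p ≤ 1) (θ : ℝ) :
    ‖↑p * Complex.exp (↑θ * Complex.I) + ↑(1-p)‖
      ≤ Real.exp (-(p*(1-p)) * (1 - Real.cos θ)) := by
  have hsq : Complex.normSq (↑p * Complex.exp (↑θ * Complex.I) + ↑(1-p))
      = 1 - 2*(p*(1-p))*(1 - Real.cos θ) := by
    have hre : (↑p * Complex.exp (↑θ * Complex.I) + ↑(1-p) : ℂ).re
        = p * Real.cos θ + (1-p) := by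
      simp [Complex.add_re, Complex.mul_re, Complex.exp_ofReal_mul_I_re,
        Complex.exp_ofReal_mul_I_im]
    have him : (↑p * Complex.exp (↑θ * Complex.I) + ↑(1-p) : ℂ).im
        = p * Real.sin θ := by
      simp [Complex.add_im, Complex.mul_im, Complex.exp_ofReal_mul_I_re,
        Complex.exp_ofReal_mul_I_im]
    rw [Complex.normSq_apply, hre, him]
    have hsc := Real.sin_sq_add_cos_sq θ
    linear_combination (p^2) * hsc
  rw [Complex.norm_def, hsq]
  have key : 1 - 2*(p*(1-p))*(1 - Real.cos θ)
      ≤ Real.exp (-(2*(p*(1-p))*(1 - Real.cos θ))) := by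
    have := Real.add_one_le_exp (-(2*(p*(1-p))*(1 - Real.cos θ)))
    linarith
  calc Real.sqrt (1 - 2*(p*(1-p))*(1 - Real.cos θ))
      ≤ Real.sqrt (Real.exp (-(2*(p*(1-p))*(1 - Real.cos θ)))) := Real.sqrt_le_sqrt key
    _ = Real.exp (-(p*(1-p)) * (1 - Real.cos θ)) := by
        rw [← Real.exp_half]; congr 1; ring

lemma factor_le_one {p : ℝ} (hp0 : 0 ≤ p) (hp1 : p ≤ 1) (θ : ℝ) :
    ‖↑p * Complex.exp (↑θ * Complex.I) + ↑(1-p)‖ ≤ 1 := by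
  refine (factor_abs hp0 hp1 θ).trans ?_
  rw [Real.exp_le_one_iff]
  have h1 : 0 ≤ 1 - Real.cos θ := by have := Real.cos_le_one θ; linarith
  have h2 : 0 ≤ p * (1-p) := by nlinarith
  nlinarith

lemma char_abs {n : ℕ} {p : ℝ} (hp0 : 0 ≤ p) (hp1 : p ≤ 1) (a : Fin n → ℝ)
    (S : Finset (Fin n)) (t : ℝ) :
    ‖∏ j, (↑p * Complex.exp (↑(t * a j) * Complex.I) + ↑(1-p))‖
      ≤ Real.exp (-(p*(1-p)) * ∑ j ∈ S, (1 - Real.cos (t * a j))) := by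
  rw [norm_prod]
  rw [← Finset.prod_mul_prod_compl S
    (fun j => ‖↑p * Complex.exp (↑(t * a j) * Complex.I) + ↑(1-p)‖)]
  have h1 : ∏ j ∈ Sᶜ, ‖↑p * Complex.exp (↑(t * a j) * Complex.I) + ↑(1-p)‖ ≤ 1 :=
    Finset.prod_le_one (fun j _ => norm_nonneg _) (fun j _ => factor_le_one hp0 hp1 _)
  have h2 : ∏ j ∈ S, ‖↑p * Complex.exp (↑(t * a j) * Complex.I) + ↑(1-p)‖
      ≤ ∏ j ∈ S, Real.exp (-(p*(1-p)) * (1 - Real.cos (t * a j))) :=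
    Finset.prod_le_prod (fun j _ => norm_nonneg _) (fun j _ => factor_abs hp0 hp1 _)
  have h3 : ∏ j ∈ S, Real.exp (-(p*(1-p)) * (1 - Real.cos (t * a j)))
      = Real.exp (-(p*(1-p)) * ∑ j ∈ S, (1 - Real.cos (t * a j))) := by
    rw [← Real.exp_sum]
    congr 1
    rw [Finset.mul_sum]
  have hS0 : (0:ℝ) ≤ ∏ j ∈ S, ‖↑p * Complex.exp (↑(t * a j) * Complex.I) + ↑(1-p)‖ :=
    Finset.prod_nonneg (fun j _ => norm_nonneg _)
  have hC0 : (0:ℝ) ≤ ∏ j ∈ Sᶜ, ‖↑p * Complex.exp (↑(t * a j) * Complex.I) + ↑(1-p)‖ :=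
    Finset.prod_nonneg (fun j _ => norm_nonneg _)
  calc (∏ j ∈ S, ‖↑p * Complex.exp (↑(t * a j) * Complex.I) + ↑(1-p)‖)
        * ∏ j ∈ Sᶜ, ‖↑p * Complex.exp (↑(t * a j) * Complex.I) + ↑(1-p)‖
      ≤ (∏ j ∈ S, ‖↑p * Complex.exp (↑(t * a j) * Complex.I) + ↑(1-p)‖) * 1 := by
        exact mul_le_mul_of_nonneg_left h1 hS0
    _ = ∏ j ∈ S, ‖↑p * Complex.exp (↑(t * a j) * Complex.I) + ↑(1-p)‖ := mul_one _
    _ ≤ _ := h3 ▸ h2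

end charfn

section charformula
attribute [local instance] Classical.propDecidable

lemma char_formula {n : ℕ} (p : ℝ) (a : Fin n → ℝ) (z₀ t : ℝ) :
    ∑ f : Fin n → Bool, (((∏ j, (if f j then p else 1-p)) : ℝ) : ℂ)
        * Complex.exp (↑(t * ((∑ j, a j * (if f j then (1:ℝ) else 0)) - z₀)) * Complex.I)
      = (∏ j, (↑p * Complex.exp (↑(t * a j) * Complex.I) + ↑(1-p)))
        * Complex.exp (↑(-(t * z₀)) * Complex.I) := by
  have key : ∀ f : Fin n → Bool,
      (((∏ j, (if f j then p else 1-p)) : ℝ) : ℂ)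
        * Complex.exp (↑(t * ((∑ j, a j * (if f j then (1:ℝ) else 0)) - z₀)) * Complex.I)
      = (∏ j, (if f j then (↑p * Complex.exp (↑(t * a j) * Complex.I)) else (↑(1-p) : ℂ)))
        * Complex.exp (↑(-(t * z₀)) * Complex.I) := by
    intro f
    have hreal : t * ((∑ j, a j * (if f j then (1:ℝ) else 0)) - z₀)
        = (∑ j, t * (a j * (if f j then (1:ℝ) else 0))) + (-(t * z₀)) := by
      rw [mul_sub, Finset.mul_sum]
      ring
    rw [hreal]
    push_cast
    rw [add_mul, Finset.sum_mul, Complex.exp_add, Complex.exp_sum]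
    rw [← mul_assoc]
    congr 1
    rw [← Finset.prod_mul_distrib]
    apply Finset.prod_congr rfl
    intro j _
    by_cases hj : f j
    · simp [hj]
    · simp [hj]
  simp_rw [key]
  rw [← Finset.sum_mul]
  congr 1
  have := sum_prod_bool' (fun (j : Fin n) (b : Bool) =>
    (if b then (↑p * Complex.exp (↑(t * a j) * Complex.I)) else (↑(1-p) : ℂ)))
  simp only [if_true, if_false] at this
  exact this

end charformula

section esseen
attribute [local instance] Classical.propDecidable
open MeasureTheory

lemma esseen_main {n : ℕ} {p : ℝ} (hp0 : 0 < p) (hp1 : p ≤ 1/2) (a : Fin n → ℝ)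
    (S : Finset (Fin n)) {τ : ℝ} (hτ : 0 < τ)
    (ha : ∀ j ∈ S, |a j| ≤ τ) (hmass : 1/2 ≤ ∑ j ∈ S, (a j)^2) (z₀ : ℝ) :
    (∑ f : Fin n → Bool, (if |(∑ j, a j * (if f j then (1:ℝ) else 0)) - z₀| ≤ τ
        then ∏ j, (if f j then p else 1-p) else 0))
      ≤ 10 * τ / Real.sqrt (p*(1-p)) := by
  have hpq : 0 < p * (1-p) := by nlinarith
  have hsq : 0 < Real.sqrt (p*(1-p)) := Real.sqrt_pos.2 hpq
  set T : ℝ := 1/τ with hTdef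
  have hT : 0 < T := by rw [hTdef]; positivity
  have hτT : τ * T = 1 := by rw [hTdef]; field_simp
  set W : (Fin n → Bool) → ℝ := fun f => ∏ j, (if f j then p else 1-p) with hWdef
  set X : (Fin n → Bool) → ℝ := fun f => (∑ j, a j * (if f j then (1:ℝ) else 0)) - z₀ with hXdef
  have hW0 : ∀ f, 0 ≤ W f := fun f =>
    Finset.prod_nonneg fun j _ => by split <;> nlinarith
  show (∑ f : Fin n → Bool, (if |X f| ≤ τ then W f else 0)) ≤ 10 * τ / Real.sqrt (p*(1-p))
  -- Step A
  have stepA : (∑ f : Fin n → Bool, (if |X f| ≤ τ then W f else 0)) * ((2/5)*T)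
      ≤ ∑ f : Fin n → Bool, W f * ∫ t in (-T)..T, (1 - |t|/T) * Real.cos (t * X f) := by
    rw [Finset.sum_mul]
    apply Finset.sum_le_sum
    intro f _
    by_cases hf : |X f| ≤ τ
    · rw [if_pos hf]
      have hXT : |X f| * T ≤ 1 := by
        have := mul_le_mul_of_nonneg_right hf hT.le
        linarith
      exact mul_le_mul_of_nonneg_left (kernel_lb hT hXT) (hW0 f)
    · rw [if_neg hf, zero_mul]
      exact mul_nonneg (hW0 f) (kernel_nonneg hT _)
  -- Step B
  have stepB : ∑ f : Fin n → Bool, W f * ∫ t in (-T)..T, (1 - |t|/T) * Real.cos (t * X f)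
      = ∫ t in (-T)..T, ∑ f : Fin n → Bool, W f * ((1 - |t|/T) * Real.cos (t * X f)) := by
    rw [intervalIntegral.integral_finset_sum]
    · apply Finset.sum_congr rfl
      intro f _
      rw [intervalIntegral.integral_const_mul]
    · intro f _
      apply Continuous.intervalIntegrable
      fun_prop
  -- Step C
  have stepC : ∀ t ∈ Set.Icc (-T) T,
      ∑ f : Fin n → Bool, W f * ((1 - |t|/T) * Real.cos (t * X f))
        ≤ Real.exp (-(p*(1-p)/5) * t^2) := by
    intro t ht
    have habst : |t| ≤ T := abs_le.2 ⟨ht.1, ht.2⟩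
    have hD0 : 0 ≤ 1 - |t|/T := by
      have : |t|/T ≤ 1 := by rw [div_le_one hT]; exact habst
      linarith
    have hD1 : 1 - |t|/T ≤ 1 := by
      have : 0 ≤ |t|/T := by positivity
      linarith
    have hsum : ∑ f : Fin n → Bool, W f * ((1 - |t|/T) * Real.cos (t * X f))
        = (1 - |t|/T) * ∑ f : Fin n → Bool, W f * Real.cos (t * X f) := by
      rw [Finset.mul_sum]
      apply Finset.sum_congr rfl
      intro f _
      ring
    set Sc : ℝ := ∑ f : Fin n → Bool, W f * Real.cos (t * X f) with hScdef
    have hre : Sc = (∑ f : Fin n → Bool,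
        ((W f : ℝ) : ℂ) * Complex.exp (↑(t * X f) * Complex.I)).re := by
      rw [Complex.re_sum, hScdef]
      apply Finset.sum_congr rfl
      intro f _
      simp only [Complex.mul_re, Complex.ofReal_re, Complex.ofReal_im,
        Complex.exp_ofReal_mul_I_re, zero_mul, sub_zero]
    have hphi : (∑ f : Fin n → Bool, ((W f : ℝ) : ℂ) * Complex.exp (↑(t * X f) * Complex.I))
        = (∏ j, ((p:ℂ) * Complex.exp (↑(t * a j) * Complex.I) + ↑(1-p)))
          * Complex.exp (↑(-(t * z₀)) * Complex.I) :=
      char_formula p a z₀ t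
    have hScle : Sc ≤ Real.exp (-(p*(1-p)/5) * t^2) := by
      have h1 : Sc ≤ ‖∑ f : Fin n → Bool,
          ((W f : ℝ) : ℂ) * Complex.exp (↑(t * X f) * Complex.I)‖ := by
        rw [hre]; exact Complex.re_le_norm _
      rw [hphi, norm_mul, Complex.norm_exp_ofReal_mul_I, mul_one] at h1
      have h2 := char_abs hp0.le (by linarith) a S t
      have h3 : (t^2)/5 ≤ ∑ j ∈ S, (1 - Real.cos (t * a j)) := by
        have hterm : ∀ j ∈ S, (2/5) * (t * a j)^2 ≤ 1 - Real.cos (t * a j) := by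
          intro j hj
          apply one_sub_cos_lb
          rw [abs_mul]
          calc |t| * |a j| ≤ T * τ :=
                mul_le_mul habst (ha j hj) (abs_nonneg _) hT.le
            _ = 1 := by rw [mul_comm]; exact hτT
        calc (t^2)/5 = (2/5) * (t^2 * (1/2)) := by ring
          _ ≤ (2/5) * (t^2 * ∑ j ∈ S, (a j)^2) := by
              apply mul_le_mul_of_nonneg_left _ (by norm_num)
              exact mul_le_mul_of_nonneg_left hmass (sq_nonneg t)
          _ = ∑ j ∈ S, (2/5) * (t * a j)^2 := by
              rw [Finset.mul_sum, Finset.mul_sum]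
              apply Finset.sum_congr rfl
              intro j _
              ring
          _ ≤ _ := Finset.sum_le_sum hterm
      have h4 : Real.exp (-(p*(1-p)) * ∑ j ∈ S, (1 - Real.cos (t * a j)))
          ≤ Real.exp (-(p*(1-p)/5) * t^2) := by
        apply Real.exp_le_exp.2
        nlinarith
      linarith
    rw [hsum]
    rcases le_or_gt Sc 0 with hSc | hSc
    · have hle : (1 - |t|/T) * Sc ≤ 0 := mul_nonpos_of_nonneg_of_nonpos hD0 hSc
      have := Real.exp_pos (-(p*(1-p)/5) * t^2)
      linarith
    · calc (1 - |t|/T) * Sc ≤ 1 * Sc := mul_le_mul_of_nonneg_right hD1 hSc.le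
        _ = Sc := one_mul _
        _ ≤ _ := hScle
  -- Step D
  have hcont : Continuous fun t : ℝ =>
      ∑ f : Fin n → Bool, W f * ((1 - |t|/T) * Real.cos (t * X f)) := by
    apply continuous_finset_sum
    intro f _
    fun_prop
  have stepD : ∫ t in (-T)..T, ∑ f : Fin n → Bool, W f * ((1 - |t|/T) * Real.cos (t * X f))
      ≤ 4 / Real.sqrt (p*(1-p)) := by
    have hD1 : ∫ t in (-T)..T, ∑ f : Fin n → Bool, W f * ((1 - |t|/T) * Real.cos (t * X f))
        ≤ ∫ t in (-T)..T, Real.exp (-(p*(1-p)/5) * t^2) :=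
      intervalIntegral.integral_mono_on (by linarith)
        (hcont.intervalIntegrable _ _)
        ((Real.continuous_exp.comp (by fun_prop)).intervalIntegrable _ _)
        stepC
    have hD2 : ∫ t in (-T)..T, Real.exp (-(p*(1-p)/5) * t^2)
        ≤ ∫ t : ℝ, Real.exp (-(p*(1-p)/5) * t^2) := by
      rw [intervalIntegral.integral_of_le (by linarith)]
      apply setIntegral_le_integral (integrable_exp_neg_mul_sq (by positivity))
      filter_upwards with t
      positivity
    have hD3 : ∫ t : ℝ, Real.exp (-(p*(1-p)/5) * t^2) = Real.sqrt (Real.pi / (p*(1-p)/5)) :=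
      integral_gaussian _
    have hD4 : Real.sqrt (Real.pi / (p*(1-p)/5)) ≤ 4 / Real.sqrt (p*(1-p)) := by
      have hpi : Real.pi ≤ 3.2 := by
        have := Real.pi_lt_d2
        linarith
      have h16 : Real.pi / (p*(1-p)/5) ≤ 16 / (p*(1-p)) := by
        rw [div_le_div_iff₀ (by positivity) hpq]
        nlinarith
      have hs16 : Real.sqrt (16 / (p*(1-p))) = 4 / Real.sqrt (p*(1-p)) := by
        rw [Real.sqrt_div (by norm_num : (0:ℝ) ≤ 16)]
        congr 1
        rw [show (16:ℝ) = 4^2 by norm_num]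
        exact Real.sqrt_sq (by norm_num)
      calc Real.sqrt (Real.pi / (p*(1-p)/5)) ≤ Real.sqrt (16 / (p*(1-p))) :=
            Real.sqrt_le_sqrt h16
        _ = 4 / Real.sqrt (p*(1-p)) := hs16
    linarith
  -- combine
  have hfin : (∑ f : Fin n → Bool, (if |X f| ≤ τ then W f else 0)) * ((2/5)*T)
      ≤ 4 / Real.sqrt (p*(1-p)) := by
    rw [stepB] at stepA
    linarith
  have hTpos : 0 < (2/5)*T := by positivity
  rw [← le_div_iff₀ hTpos] at hfin
  refine hfin.trans (le_of_eq ?_)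
  rw [hTdef]
  field_simp
  ring

end esseen

open scoped Matrix

section linalg

lemma row_orth {k n : ℕ} {M : Matrix (Fin k) (Fin n) ℝ} (hM : M * Mᵀ = 1) (i i' : Fin k) :
    ∑ j, M i j * M i' j = if i = i' then 1 else 0 := by
  have h : (M * Mᵀ) i i' = (1 : Matrix (Fin k) (Fin k) ℝ) i i' := by rw [hM]
  simpa [Matrix.mul_apply, Matrix.transpose_apply, Matrix.one_apply] using h

lemma key_id {k n : ℕ} {M : Matrix (Fin k) (Fin n) ℝ} (hM : M * Mᵀ = 1) (u : Fin k → ℝ) :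
    ∑ j, (∑ i, u i * M i j)^2 = ∑ i, (u i)^2 := by
  calc ∑ j, (∑ i, u i * M i j)^2
      = ∑ j, ∑ i, ∑ i', (u i * M i j) * (u i' * M i' j) := by
        apply Finset.sum_congr rfl; intro j _; rw [sq, Finset.sum_mul_sum]
    _ = ∑ i, ∑ i', (u i * u i') * ∑ j, M i j * M i' j := by
        rw [Finset.sum_comm]
        apply Finset.sum_congr rfl; intro i _
        rw [Finset.sum_comm]
        apply Finset.sum_congr rfl; intro i' _
        rw [Finset.mul_sum]
        apply Finset.sum_congr rfl; intro j _; ring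
    _ = ∑ i, (u i)^2 := by
        apply Finset.sum_congr rfl; intro i _
        simp only [row_orth hM, mul_ite, mul_one, mul_zero]
        rw [Finset.sum_ite_eq Finset.univ i (fun i' => u i * u i')]
        simp [sq]

lemma col_sum {k n : ℕ} {M : Matrix (Fin k) (Fin n) ℝ} (hM : M * Mᵀ = 1) :
    ∑ j, ∑ i, (M i j)^2 = (k : ℝ) := by
  rw [Finset.sum_comm]
  have h : ∀ i : Fin k, ∑ j, (M i j)^2 = 1 := by
    intro i
    have := row_orth hM i i
    simpa [sq] using this
  simp [h]

lemma ip_mulVec {k n : ℕ} (M : Matrix (Fin k) (Fin n) ℝ) (u : Fin k → ℝ) (v : Fin n → ℝ) :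
    ∑ i, u i * M.mulVec v i = ∑ j, (∑ i, u i * M i j) * v j := by
  simp only [Matrix.mulVec, dotProduct, Finset.mul_sum, Finset.sum_mul]
  rw [Finset.sum_comm]
  apply Finset.sum_congr rfl; intro j _
  apply Finset.sum_congr rfl; intro i _
  ring

lemma ip_le_enorm2 {k : ℕ} (u w : Fin k → ℝ) (hu : ∑ i, (u i)^2 = 1) :
    |∑ i, u i * w i| ≤ enorm2 w := by
  have h := Finset.sum_mul_sq_le_sq_mul_sq Finset.univ u w
  rw [hu, one_mul] at h
  unfold enorm2
  rw [← Real.sqrt_sq_eq_abs]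
  exact Real.sqrt_le_sqrt h

lemma cs_sq {k : ℕ} (u w : Fin k → ℝ) :
    (∑ i, u i * w i)^2 ≤ (∑ i, (u i)^2) * (∑ i, (w i)^2) :=
  Finset.sum_mul_sq_le_sq_mul_sq Finset.univ u w

lemma exists_unit_orthogonal {k l : ℕ} (hl : l < k) (c : Fin l → (Fin k → ℝ)) :
    ∃ u : Fin k → ℝ, (∑ i, (u i)^2 = 1) ∧ ∀ m : Fin l, (∑ i, u i * c m i) = 0 := by
  classical
  set c' : Fin l → EuclideanSpace ℝ (Fin k) := fun m => (WithLp.equiv 2 _).symm (c m) with hc'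
  set V : Submodule ℝ (EuclideanSpace ℝ (Fin k)) := Submodule.span ℝ (Set.range c') with hV
  have hVne : V ≠ ⊤ := by
    intro htop
    have h1 : Module.finrank ℝ V ≤ l := by
      have h0 := finrank_range_le_card (R := ℝ) (M := EuclideanSpace ℝ (Fin k)) c'
      rw [Fintype.card_fin] at h0; exact h0
    rw [htop] at h1
    rw [finrank_top, finrank_euclideanSpace_fin] at h1
    omega
  have horth : Vᗮ ≠ ⊥ := by
    rw [Ne, Submodule.orthogonal_eq_bot_iff]
    exact hVne
  obtain ⟨v, hvV, hv0⟩ := Submodule.exists_mem_ne_zero_of_ne_bot horth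
  set u : EuclideanSpace ℝ (Fin k) := (‖v‖⁻¹ : ℝ) • v with hu
  have hunorm : ‖u‖ = 1 := norm_smul_inv_norm hv0
  have huV : u ∈ Vᗮ := Submodule.smul_mem _ _ hvV
  refine ⟨fun i => u i, ?_, ?_⟩
  · have h2 : ∑ i, (u i)^2 = ‖u‖^2 := by
      rw [EuclideanSpace.norm_eq]
      rw [Real.sq_sqrt (by positivity)]
      apply Finset.sum_congr rfl
      intro i _
      rw [Real.norm_eq_abs, sq_abs]
    rw [h2, hunorm, one_pow]
  · intro m
    have hcm : c' m ∈ V := Submodule.subset_span ⟨m, rfl⟩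
    have hinner : (inner ℝ (c' m) u : ℝ) = 0 :=
      (Submodule.mem_orthogonal V u).mp huV (c' m) hcm
    rw [PiLp.inner_apply] at hinner
    simp only [RCLike.inner_apply, conj_trivial] at hinner
    rw [← hinner]
    apply Finset.sum_congr rfl
    intro i _
    have : c' m i = c m i := rfl
    rw [this]

end linalg

section greedy

lemma greedy {k n : ℕ} (M : Matrix (Fin k) (Fin n) ℝ) (B : Finset (Fin n)) (δ : ℝ)
    (hB : ∀ u : Fin k → ℝ, (∑ i, (u i)^2 = 1) → ∃ j ∈ B, δ < |∑ i, u i * M i j|) :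
    ∀ l : ℕ, l ≤ k → ∃ (σ : Fin l → Fin n) (U : Fin l → (Fin k → ℝ)),
      ∀ m : Fin l, (∑ i, (U m i)^2 = 1) ∧ δ < |∑ i, U m i * M i (σ m)| ∧
        ∀ m' : Fin l, m' < m → ∑ i, U m i * M i (σ m') = 0 := by
  intro l
  induction l with
  | zero => exact fun _ => ⟨Fin.elim0, Fin.elim0, fun m => m.elim0⟩
  | succ l ih =>
    intro hl
    obtain ⟨σ, U, hσU⟩ := ih (Nat.le_of_succ_le hl)
    obtain ⟨u, hu1, hu2⟩ := exists_unit_orthogonal (Nat.lt_of_succ_le hl)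
      (fun m => (fun i => M i (σ m)))
    obtain ⟨j, _, hj⟩ := hB u hu1
    refine ⟨Fin.snoc σ j, Fin.snoc U u, ?_⟩
    intro m
    refine Fin.lastCases ?_ ?_ m
    · refine ⟨by rw [Fin.snoc_last]; exact hu1, by rw [Fin.snoc_last, Fin.snoc_last]; exact hj, ?_⟩
      intro m' hm'
      have hm'lt : m' ≠ Fin.last l := by
        intro hcon
        rw [hcon] at hm'
        exact lt_irrefl _ hm'
      obtain ⟨m'', rfl⟩ := Fin.exists_castSucc_eq.2 hm'lt
      rw [Fin.snoc_last, Fin.snoc_castSucc]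
      exact hu2 m''
    · intro m''
      refine ⟨?_, ?_, ?_⟩
      · rw [Fin.snoc_castSucc]; exact (hσU m'').1
      · rw [Fin.snoc_castSucc, Fin.snoc_castSucc]; exact (hσU m'').2.1
      · intro m' hm'
        have hm'ne : m' ≠ Fin.last l := by
          intro hcon
          rw [hcon] at hm'
          have := (Fin.castSucc_lt_last m'')
          exact absurd (hm'.trans this) (lt_irrefl _)
        obtain ⟨m''', rfl⟩ := Fin.exists_castSucc_eq.2 hm'ne
        rw [Fin.snoc_castSucc, Fin.snoc_castSucc]
        exact (hσU m'').2.2 m''' (by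
          have := hm'
          rwa [Fin.castSucc_lt_castSucc_iff] at this)

end greedy

lemma weight_nonneg {ι : Type*} [Fintype ι] {p : ℝ} (hp0 : 0 ≤ p) (hp1 : p ≤ 1) (f : ι → Bool) :
    0 ≤ ∏ i, (if f i then p else 1 - p) :=
  Finset.prod_nonneg fun i _ => by split <;> [exact hp0; linarith]

lemma berProb_mono {ι : Type*} [Fintype ι] [DecidableEq ι] {p : ℝ}
    (hp0 : 0 ≤ p) (hp1 : p ≤ 1) {E E' : (ι → ℝ) → Prop}
    (h : ∀ v, E v → E' v) : berProb p E ≤ berProb p E' := by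
  refine Finset.sum_le_sum fun f _ => ?_
  by_cases hE : E (fun i => if f i then 1 else 0)
  · rw [if_pos hE, if_pos (h _ hE)]
  · rw [if_neg hE]
    split
    · exact weight_nonneg hp0 hp1 f
    · exact le_rfl

section cond

lemma berProb_cond {n k : ℕ} {p : ℝ} (hp0 : 0 < p) (hp1 : p ≤ 1/2)
    (σ : Fin k → Fin n) (hσ : Function.Injective σ) (E : (Fin n → ℝ) → Prop)
    (huniq : ∀ f g : Fin n → Bool, (∀ j, (¬ ∃ l, σ l = j) → f j = g j) →
      E (fun i => if f i then 1 else 0) → E (fun i => if g i then 1 else 0) → f = g) :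
    berProb p E ≤ (1-p)^k := by
  have hq0 : (0:ℝ) ≤ 1 - p := by linarith
  have hpn : 0 ≤ p := hp0.le
  have hpq : p ≤ 1 - p := by linarith
  set pr : Fin n → Prop := fun j => ∃ l, σ l = j with hpr
  set e : ((∀ _ : {x // pr x}, Bool) × (∀ _ : {x // ¬ pr x}, Bool)) ≃ (Fin n → Bool) :=
    (Equiv.piEquivPiSubtypeProd pr (fun _ => Bool)).symm with he
  have hcard : Fintype.card {x // pr x} = k := by
    have hbij : Function.Bijective (fun l : Fin k => (⟨σ l, ⟨l, rfl⟩⟩ : {x // pr x})) := by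
      constructor
      · intro l l' hll'
        exact hσ (congrArg Subtype.val hll')
      · rintro ⟨x, ⟨l, rfl⟩⟩
        exact ⟨l, rfl⟩
    rw [← Fintype.card_of_bijective hbij, Fintype.card_fin]
  have hsplit : ∀ f : Fin n → Bool, (∏ j, (if f j then p else 1 - p))
      = (∏ i : {x // pr x}, (if f i then p else 1 - p))
        * ∏ i : {x // ¬ pr x}, (if f i then p else 1 - p) :=
    fun f => (Fintype.prod_subtype_mul_prod_subtype pr (fun j => if f j then p else 1 - p)).symm
  have hWin_le : ∀ gin : (∀ _ : {x // pr x}, Bool),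
      (∏ i : {x // pr x}, (if gin i then p else 1 - p)) ≤ (1-p)^k := by
    intro gin
    calc ∏ i : {x // pr x}, (if gin i then p else 1 - p)
        ≤ ∏ _i : {x // pr x}, (1 - p) := by
          apply Finset.prod_le_prod
          · intro i _; split <;> linarith
          · intro i _; split <;> linarith
      _ = (1-p)^k := by rw [Finset.prod_const, Finset.card_univ, hcard]
  have hWout_0 : ∀ gout : (∀ _ : {x // ¬ pr x}, Bool),
      0 ≤ (∏ i : {x // ¬ pr x}, (if gout i then p else 1 - p)) := by
    intro gout
    apply Finset.prod_nonneg
    intro i _; split <;> linarith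
  have hWout_sum : ∑ gout : (∀ _ : {x // ¬ pr x}, Bool),
      (∏ i : {x // ¬ pr x}, (if gout i then p else 1 - p)) = 1 := by
    rw [sum_prod_bool' (fun (_ : {x // ¬ pr x}) (b : Bool) => if b then p else 1 - p)]
    simp
  rw [berProb, ← Equiv.sum_comp e (fun f : Fin n → Bool =>
    if E (fun i => if f i then 1 else 0) then ∏ j, (if f j then p else 1 - p) else 0),
    Fintype.sum_prod_type_right]
  have hagree : ∀ (gin gin' : ∀ _ : {x // pr x}, Bool) (gout : ∀ _ : {x // ¬ pr x}, Bool)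
      (j : Fin n), ¬ pr j → (e (gin, gout)) j = (e (gin', gout)) j := by
    intro gin gin' gout j hj
    simp [he, Equiv.piEquivPiSubtypeProd_symm_apply, dif_neg hj]
  have hprodin : ∀ (gin : ∀ _ : {x // pr x}, Bool) (gout : ∀ _ : {x // ¬ pr x}, Bool),
      (∏ i : {x // pr x}, (if (e (gin, gout)) i.1 then p else 1 - p))
        = ∏ i : {x // pr x}, (if gin i then p else 1 - p) := by
    intro gin gout
    apply Finset.prod_congr rfl
    intro i _
    congr 1
    simp [he, Equiv.piEquivPiSubtypeProd_symm_apply, dif_pos i.2]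
  have hprodout : ∀ (gin : ∀ _ : {x // pr x}, Bool) (gout : ∀ _ : {x // ¬ pr x}, Bool),
      (∏ i : {x // ¬ pr x}, (if (e (gin, gout)) i.1 then p else 1 - p))
        = ∏ i : {x // ¬ pr x}, (if gout i then p else 1 - p) := by
    intro gin gout
    apply Finset.prod_congr rfl
    intro i _
    congr 1
    simp [he, Equiv.piEquivPiSubtypeProd_symm_apply, dif_neg i.2]
  have inner_bound : ∀ gout : (∀ _ : {x // ¬ pr x}, Bool),
      (∑ gin : (∀ _ : {x // pr x}, Bool),
          (if E (fun i => if (e (gin, gout)) i then 1 else 0)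
            then ∏ j, (if (e (gin, gout)) j then p else 1 - p) else 0))
        ≤ (1-p)^k * ∏ i : {x // ¬ pr x}, (if gout i then p else 1 - p) := by
    intro gout
    by_cases hex : ∃ gin : (∀ _ : {x // pr x}, Bool),
        E (fun i => if (e (gin, gout)) i then 1 else 0)
    · obtain ⟨g₀, hg₀⟩ := hex
      have hle : ∀ gin : (∀ _ : {x // pr x}, Bool),
          (if E (fun i => if (e (gin, gout)) i then 1 else 0)
            then ∏ j, (if (e (gin, gout)) j then p else 1 - p) else 0)
          ≤ (if gin = g₀ then ∏ j, (if (e (g₀, gout)) j then p else 1 - p) else 0) := by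
        intro gin
        by_cases hEgin : E (fun i => if (e (gin, gout)) i then 1 else 0)
        · have heq : gin = g₀ := by
            have hfg := huniq (e (gin, gout)) (e (g₀, gout))
              (fun j hj => hagree gin g₀ gout j hj) hEgin hg₀
            exact (Prod.ext_iff.1 (e.injective hfg)).1
          rw [if_pos hEgin, heq, if_pos rfl]
        · rw [if_neg hEgin]
          split
          · apply Finset.prod_nonneg
            intro j _; split <;> linarith
          · exact le_refl 0
      calc (∑ gin : (∀ _ : {x // pr x}, Bool),
          (if E (fun i => if (e (gin, gout)) i then 1 else 0)
            then ∏ j, (if (e (gin, gout)) j then p else 1 - p) else 0))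
          ≤ ∑ gin : (∀ _ : {x // pr x}, Bool),
              (if gin = g₀ then ∏ j, (if (e (g₀, gout)) j then p else 1 - p) else 0) :=
            Finset.sum_le_sum (fun gin _ => hle gin)
        _ = ∏ j, (if (e (g₀, gout)) j then p else 1 - p) := by
            rw [Finset.sum_ite_eq' Finset.univ g₀
              (fun _ => ∏ j, (if (e (g₀, gout)) j then p else 1 - p))]
            simp
        _ = (∏ i : {x // pr x}, (if g₀ i then p else 1 - p))
              * ∏ i : {x // ¬ pr x}, (if gout i then p else 1 - p) := by
            rw [hsplit (e (g₀, gout)), hprodin, hprodout]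
        _ ≤ (1-p)^k * ∏ i : {x // ¬ pr x}, (if gout i then p else 1 - p) :=
            mul_le_mul_of_nonneg_right (hWin_le g₀) (hWout_0 gout)
    · push_neg at hex
      have hz : ∀ gin : (∀ _ : {x // pr x}, Bool),
          (if E (fun i => if (e (gin, gout)) i then 1 else 0)
            then ∏ j, (if (e (gin, gout)) j then p else 1 - p) else 0) = 0 := by
        intro gin
        rw [if_neg (hex gin)]
      rw [Finset.sum_eq_zero (fun gin _ => hz gin)]
      exact mul_nonneg (pow_nonneg hq0 k) (hWout_0 gout)
  calc (∑ gout : (∀ _ : {x // ¬ pr x}, Bool), ∑ gin : (∀ _ : {x // pr x}, Bool),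
        (if E (fun i => if (e (gin, gout)) i then 1 else 0)
          then ∏ j, (if (e (gin, gout)) j then p else 1 - p) else 0))
      ≤ ∑ gout : (∀ _ : {x // ¬ pr x}, Bool),
          (1-p)^k * ∏ i : {x // ¬ pr x}, (if gout i then p else 1 - p) :=
        Finset.sum_le_sum (fun gout _ => inner_bound gout)
    _ = (1-p)^k := by
        rw [← Finset.mul_sum, hWout_sum, mul_one]

end cond

/-- key Lévy-concentration estimate for matrices with orthonormal rows. -/
theorem stmt7 (p : ℝ) (hp : p ∈ Set.Ioc (0 : ℝ) (1 / 2)) (k : ℕ) (hk : 1 ≤ k) :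
    ∃ θ : ℝ, 0 < θ ∧
      ∀ (n : ℕ) (M : Matrix (Fin k) (Fin n) ℝ), M * Mᵀ = 1 →
        levy p (fun v => M.mulVec v) θ ≤ (1 - p) ^ k := by
  obtain ⟨hp0, hp1⟩ := hp
  have hq0 : (0:ℝ) < 1 - p := by linarith
  have hpq : (0:ℝ) < p * (1-p) := by nlinarith
  have hsq : 0 < Real.sqrt (p*(1-p)) := Real.sqrt_pos.2 hpq
  have hk0 : (0:ℝ) < (k:ℝ) := by exact_mod_cast hk
  have hk1 : (1:ℝ) ≤ (k:ℝ) := by exact_mod_cast hk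
  set τ : ℝ := Real.sqrt (p*(1-p)) / (10 * 2^k) with hτdef
  have hτ0 : 0 < τ := by
    apply div_pos hsq
    positivity
  have hs2k : 1 ≤ Real.sqrt (2*k) := by
    rw [show (1:ℝ) = Real.sqrt 1 by simp]
    apply Real.sqrt_le_sqrt
    linarith
  have hs2k0 : 0 < Real.sqrt (2*k) := by linarith
  set θ : ℝ := τ / (4 * Real.sqrt (2*k)) with hθdef
  have hθ0 : 0 < θ := by
    apply div_pos hτ0
    nlinarith
  have hθτ : θ ≤ τ := by
    rw [hθdef]
    apply div_le_self hτ0.le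
    nlinarith
  have h2k : (1/2:ℝ)^k ≤ (1-p)^k := by
    apply pow_le_pow_left₀ (by norm_num)
    linarith
  refine ⟨θ, hθ0, ?_⟩
  intro n M hM
  rw [levy]
  apply ciSup_le
  intro z
  set B : Finset (Fin n) := Finset.univ.filter (fun j => τ^2 < ∑ i, (M i j)^2) with hB
  by_cases hcase : ∃ u : Fin k → ℝ, (∑ i, (u i)^2 = 1)
      ∧ 1/2 ≤ ∑ j ∈ Bᶜ, (∑ i, u i * M i j)^2
  · -- CASE (i): spread case, Esseen bound
    obtain ⟨u, hu1, hu2⟩ := hcase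
    have himp : ∀ v : Fin n → ℝ, enorm2 (fun i => M.mulVec v i - z i) ≤ θ →
        |(∑ j, (∑ i, u i * M i j) * v j) - (∑ i, u i * z i)| ≤ τ := by
      intro v hv
      have h1 : |∑ i, u i * (M.mulVec v i - z i)| ≤ enorm2 (fun i => M.mulVec v i - z i) :=
        ip_le_enorm2 u _ hu1
      have h2 : ∑ i, u i * (M.mulVec v i - z i)
          = (∑ j, (∑ i, u i * M i j) * v j) - (∑ i, u i * z i) := by
        rw [← ip_mulVec M u v, ← Finset.sum_sub_distrib]
        apply Finset.sum_congr rfl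
        intro i _
        ring
      rw [h2] at h1
      calc |(∑ j, (∑ i, u i * M i j) * v j) - (∑ i, u i * z i)|
          ≤ enorm2 (fun i => M.mulVec v i - z i) := h1
        _ ≤ θ := hv
        _ ≤ τ := hθτ
    have hmono := berProb_mono hp0.le (by linarith)
      (E := fun v => enorm2 (fun i => M.mulVec v i - z i) ≤ θ)
      (E' := fun v => |(∑ j, (∑ i, u i * M i j) * v j) - (∑ i, u i * z i)| ≤ τ) himp
    have hess := esseen_main hp0 hp1 (fun j => ∑ i, u i * M i j) Bᶜ hτ0 ?_ hu2 (∑ i, u i * z i)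
    · have hval : 10 * τ / Real.sqrt (p*(1-p)) = (1/2:ℝ)^k := by
        rw [hτdef]
        field_simp
        rw [← mul_pow]; norm_num
      calc berProb p (fun v => enorm2 (fun i => M.mulVec v i - z i) ≤ θ)
          ≤ berProb p (fun v =>
              |(∑ j, (∑ i, u i * M i j) * v j) - (∑ i, u i * z i)| ≤ τ) := hmono
        _ ≤ 10 * τ / Real.sqrt (p*(1-p)) := hess
        _ = (1/2:ℝ)^k := hval
        _ ≤ (1-p)^k := h2k
    · -- columns in Bᶜ are short
      intro j hj
      have hjB : ¬ (τ^2 < ∑ i, (M i j)^2) := by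
        rw [Finset.mem_compl, hB, Finset.mem_filter] at hj
        intro hcon
        exact hj ⟨Finset.mem_univ j, hcon⟩
      push_neg at hjB
      have hcs : (∑ i, u i * M i j)^2 ≤ τ^2 := by
        have := cs_sq u (fun i => M i j)
        rw [hu1, one_mul] at this
        exact this.trans hjB
      have := Real.sqrt_le_sqrt hcs
      rwa [Real.sqrt_sq_eq_abs, Real.sqrt_sq hτ0.le] at this
  · -- CASE (ii): rigid case
    push_neg at hcase
    have hBig : ∀ u : Fin k → ℝ, (∑ i, (u i)^2 = 1) →
        1/2 < ∑ j ∈ B, (∑ i, u i * M i j)^2 := by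
      intro u hu1
      have htot : (∑ j ∈ B, (∑ i, u i * M i j)^2) + ∑ j ∈ Bᶜ, (∑ i, u i * M i j)^2 = 1 := by
        rw [Finset.sum_add_sum_compl, key_id hM, hu1]
      have := hcase u hu1
      linarith
    have hcardB : (B.card : ℝ) * τ^2 ≤ (k:ℝ) := by
      have h1 : ∑ j ∈ B, τ^2 ≤ ∑ j ∈ B, ∑ i, (M i j)^2 := by
        apply Finset.sum_le_sum
        intro j hj
        rw [hB, Finset.mem_filter] at hj
        exact hj.2.le
      have h2 : ∑ j ∈ B, ∑ i, (M i j)^2 ≤ ∑ j, ∑ i, (M i j)^2 := by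
        apply Finset.sum_le_sum_of_subset_of_nonneg (Finset.subset_univ B)
        intro j _ _
        positivity
      rw [Finset.sum_const, nsmul_eq_mul] at h1
      rw [col_sum hM] at h2
      linarith
    set δ : ℝ := τ / Real.sqrt (2*k) with hδdef
    have hδ0 : 0 < δ := div_pos hτ0 hs2k0
    have hδsq : δ^2 = τ^2 / (2*k) := by
      rw [hδdef, div_pow, Real.sq_sqrt (by positivity)]
    have h2θδ : 2*θ < δ := by
      rw [hθdef, hδdef]
      have he1 : 2 * (τ / (4 * Real.sqrt (2*k))) = τ / (2 * Real.sqrt (2*k)) := by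
        field_simp
        ring
      rw [he1]
      exact div_lt_div_of_pos_left hτ0 hs2k0 (by linarith)
    have hB2 : ∀ u : Fin k → ℝ, (∑ i, (u i)^2 = 1) →
        ∃ j ∈ B, δ < |∑ i, u i * M i j| := by
      intro u hu1
      by_contra hcon
      push_neg at hcon
      have hterm : ∀ j ∈ B, (∑ i, u i * M i j)^2 ≤ δ^2 := by
        intro j hj
        have h := hcon j hj
        have habs : 0 ≤ |∑ i, u i * M i j| := abs_nonneg _
        calc (∑ i, u i * M i j)^2 = |∑ i, u i * M i j|^2 := (sq_abs _).symm
          _ ≤ δ^2 := by nlinarith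
      have hsum : ∑ j ∈ B, (∑ i, u i * M i j)^2 ≤ (B.card : ℝ) * δ^2 := by
        calc ∑ j ∈ B, (∑ i, u i * M i j)^2 ≤ ∑ _j ∈ B, δ^2 := Finset.sum_le_sum hterm
          _ = (B.card : ℝ) * δ^2 := by rw [Finset.sum_const, nsmul_eq_mul]
      have hhalf : (B.card : ℝ) * δ^2 ≤ 1/2 := by
        rw [hδsq]
        calc (B.card : ℝ) * (τ^2 / (2*k)) = ((B.card:ℝ) * τ^2) / (2*k) := by ring
          _ ≤ (k:ℝ) / (2*k) := by
              gcongr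
          _ = 1/2 := by
              field_simp
      have := hBig u hu1
      linarith
    obtain ⟨σ, U, hσU⟩ := greedy M B δ hB2 k le_rfl
    have hσinj : Function.Injective σ := by
      have key : ∀ a b : Fin k, a < b → σ a = σ b → False := by
        intro a b hab heq
        have h0 := (hσU b).2.2 a hab
        have h1 := (hσU b).2.1
        rw [← heq, h0] at h1
        simp only [abs_zero] at h1
        linarith
      intro m m' hmm'
      by_contra hne
      rcases lt_or_gt_of_ne hne with h | h
      · exact key m m' h hmm'
      · exact key m' m h hmm'.symm
    apply berProb_cond hp0 hp1 σ hσinj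
    intro f g hagree hEf hEg
    by_contra hfg
    have hD : ∃ m : Fin k, f (σ m) ≠ g (σ m) := by
      by_contra hall
      push_neg at hall
      apply hfg
      funext j
      by_cases hj : ∃ l, σ l = j
      · obtain ⟨l, rfl⟩ := hj
        exact hall l
      · exact hagree j hj
    set D : Finset (Fin k) := Finset.univ.filter (fun m => f (σ m) ≠ g (σ m)) with hDdef
    have hDne : D.Nonempty := by
      obtain ⟨m, hm⟩ := hD
      exact ⟨m, by rw [hDdef, Finset.mem_filter]; exact ⟨Finset.mem_univ m, hm⟩⟩
    set L := D.max' hDne with hLdef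
    have hLD : L ∈ D := D.max'_mem hDne
    have hLne : f (σ L) ≠ g (σ L) := by
      rw [hDdef, Finset.mem_filter] at hLD
      exact hLD.2
    set u : Fin k → ℝ := U L with hudef
    set vf : Fin n → ℝ := fun i => if f i then 1 else 0 with hvf
    set vg : Fin n → ℝ := fun i => if g i then 1 else 0 with hvg
    have hEf2 : enorm2 (fun i => M.mulVec vf i - z i) ≤ θ := hEf
    have hEg2 : enorm2 (fun i => M.mulVec vg i - z i) ≤ θ := hEg
    have hiden : ∑ j, (∑ i, u i * M i j) * (vf j - vg j)
        = (∑ i, u i * M i (σ L)) * (vf (σ L) - vg (σ L)) := by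
      apply Finset.sum_eq_single (σ L)
      · intro j _ hjne
        by_cases hj : ∃ l, σ l = j
        · obtain ⟨l, rfl⟩ := hj
          have hlL : l ≠ L := fun hcon => hjne (by rw [hcon])
          rcases lt_or_gt_of_ne hlL with hlt | hgt
          · rw [(hσU L).2.2 l hlt, zero_mul]
          · have hlD : l ∉ D := fun hcon => absurd (D.le_max' l hcon) (not_le.mpr hgt)
            have hfg' : f (σ l) = g (σ l) := by
              by_contra hne
              exact hlD (by rw [hDdef, Finset.mem_filter]; exact ⟨Finset.mem_univ l, hne⟩)
            have hv : vf (σ l) - vg (σ l) = 0 := by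
              rw [hvf, hvg]; simp [hfg']
            rw [hv, mul_zero]
        · have hfgj : f j = g j := hagree j hj
          have hv : vf j - vg j = 0 := by rw [hvf, hvg]; simp [hfgj]
          rw [hv, mul_zero]
      · intro hcon
        exact absurd (Finset.mem_univ (σ L)) hcon
    have hlow : δ < |(∑ i, u i * M i (σ L)) * (vf (σ L) - vg (σ L))| := by
      have habs1 : |vf (σ L) - vg (σ L)| = 1 := by
        rw [hvf, hvg]
        rcases Bool.eq_false_or_eq_true (f (σ L)) with hf' | hf' <;>
          rcases Bool.eq_false_or_eq_true (g (σ L)) with hg' | hg' <;>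
          simp [hf', hg'] at hLne ⊢
      rw [abs_mul, habs1, mul_one]
      exact (hσU L).2.1
    have hup : |∑ j, (∑ i, u i * M i j) * (vf j - vg j)| ≤ 2*θ := by
      have hEf3 : |∑ i, u i * (M.mulVec vf i - z i)| ≤ θ :=
        le_trans (ip_le_enorm2 u _ (hσU L).1) hEf2
      have hEg3 : |∑ i, u i * (M.mulVec vg i - z i)| ≤ θ :=
        le_trans (ip_le_enorm2 u _ (hσU L).1) hEg2
      have hsplit2 : ∑ j, (∑ i, u i * M i j) * (vf j - vg j)
          = (∑ i, u i * (M.mulVec vf i - z i)) - (∑ i, u i * (M.mulVec vg i - z i)) := by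
        have e1 : ∑ i, u i * (M.mulVec vf i - z i)
            = (∑ j, (∑ i, u i * M i j) * vf j) - (∑ i, u i * z i) := by
          rw [← ip_mulVec M u vf, ← Finset.sum_sub_distrib]
          apply Finset.sum_congr rfl
          intro i _
          ring
        have e2 : ∑ i, u i * (M.mulVec vg i - z i)
            = (∑ j, (∑ i, u i * M i j) * vg j) - (∑ i, u i * z i) := by
          rw [← ip_mulVec M u vg, ← Finset.sum_sub_distrib]
          apply Finset.sum_congr rfl
          intro i _
          ring
        have e4 : ∑ j, (∑ i, u i * M i j) * (vf j - vg j)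
            = (∑ j, (∑ i, u i * M i j) * vf j) - (∑ j, (∑ i, u i * M i j) * vg j) := by
          rw [← Finset.sum_sub_distrib]
          apply Finset.sum_congr rfl
          intro j _
          ring
        rw [e4, e1, e2]
        ring
      rw [hsplit2]
      calc |(∑ i, u i * (M.mulVec vf i - z i)) - (∑ i, u i * (M.mulVec vg i - z i))|
          ≤ |∑ i, u i * (M.mulVec vf i - z i)| + |∑ i, u i * (M.mulVec vg i - z i)| :=
            abs_sub _ _
        _ ≤ θ + θ := add_le_add hEf3 hEg3
        _ = 2*θ := by ring
    rw [hiden] at hup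
    linarith
end

section
/- Let $R_1,\dots,R_{m}$ be independent $\mathbb{R}^n$-valued random vectors, let $V$ be an $n\times k$ matrix, and suppose $\mathbb{P}[\|R_iV\|_2\le\theta]\le q$ for all $i$ and some $\theta>0$, $q\in(0,1)$. Let $M$ be the $m\times n$ matrix with rows $R_i$. Then for any $0<\epsilon'<1$, $\mathbb{P}[\|MV\|_{\operatorname{HS}}\le\theta\sqrt{\epsilon' m}]\le \binom{m}{\lfloor\epsilon' m\rfloor}\cdot(m+1)\cdot q^{(1-\epsilon')m}$. -/
open scoped BigOperators Matrix Matrix.Norms.L2Operator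

attribute [local instance] Classical.propDecidable

open MeasureTheory ProbabilityTheory
open scoped ENNReal

/-- tensorization of small-ball probabilities for independent rows. -/
theorem stmt9 {Ω : Type*} [MeasurableSpace Ω] (μ : Measure Ω) [IsProbabilityMeasure μ]
    (m n k : ℕ) (R : Fin m → Ω → (Fin n → ℝ)) (hmeas : ∀ i, Measurable (R i))
    (hindep : iIndepFun R μ)
    (V : Matrix (Fin n) (Fin k) ℝ) (θ : ℝ) (hθ : 0 < θ)
    (q : ℝ≥0∞) (hq0 : 0 < q) (hq1 : q < 1)
    (hrow : ∀ i, μ {ω | enorm2 (Matrix.vecMul (R i ω) V) ≤ θ} ≤ q)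
    (ε' : ℝ) (hε'0 : 0 < ε') (hε'1 : ε' < 1) :
    μ {ω | Real.sqrt (∑ i, ∑ j, ((Matrix.of (fun a b => R a ω b) * V) i j) ^ 2)
          ≤ θ * Real.sqrt (ε' * m)}
      ≤ (m.choose ⌊ε' * m⌋₊ : ℝ≥0∞) * (m + 1 : ℝ≥0∞) * q ^ ((1 - ε') * m : ℝ) := by
  classical
  set r := ⌊ε' * m⌋₊ with hr
  have hεm0 : (0:ℝ) ≤ ε' * m := by positivity
  have hrm : (r : ℝ) ≤ ε' * m := Nat.floor_le hεm0
  have hrm' : r ≤ m := by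
    have h1 : (r : ℝ) ≤ m := hrm.trans (by nlinarith [Nat.cast_nonneg (α := ℝ) m])
    exact_mod_cast h1
  set t := m - r with ht
  have htcast : (t : ℝ) = (m : ℝ) - r := by
    rw [ht, Nat.cast_sub hrm']
  have htm : ((1 - ε') * m : ℝ) ≤ t := by rw [htcast]; nlinarith
  set C : Set (Fin n → ℝ) := {x | enorm2 (Matrix.vecMul x V) ≤ θ} with hC
  have hCcont : Continuous fun x : Fin n → ℝ => enorm2 (Matrix.vecMul x V) := by
    unfold enorm2
    apply Real.continuous_sqrt.comp
    apply continuous_finset_sum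
    intro j _
    have h2 : Continuous fun x : Fin n → ℝ => Matrix.vecMul x V j := by
      simp only [Matrix.vecMul, dotProduct]
      exact continuous_finset_sum _ fun b _ => (continuous_apply b).mul continuous_const
    exact h2.pow 2
  have hCmeas : MeasurableSet C := measurableSet_le hCcont.measurable measurable_const
  have hsub : {ω | Real.sqrt (∑ i, ∑ j, ((Matrix.of (fun a b => R a ω b) * V) i j) ^ 2)
          ≤ θ * Real.sqrt (ε' * m)} ⊆
      ⋃ S ∈ Finset.powersetCard t (Finset.univ : Finset (Fin m)),
        ⋂ i ∈ S, (R i) ⁻¹' C := by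
    intro ω hω
    simp only [Set.mem_setOf_eq] at hω
    set A := ∑ i, ∑ j, ((Matrix.of (fun a b => R a ω b) * V) i j) ^ 2 with hA
    have hA0 : 0 ≤ A := by positivity
    have hA2 : A ≤ θ ^ 2 * (ε' * m) := by
      have h3 : A = Real.sqrt A ^ 2 := (Real.sq_sqrt hA0).symm
      have h4 : Real.sqrt A ^ 2 ≤ (θ * Real.sqrt (ε' * m)) ^ 2 :=
        pow_le_pow_left₀ (Real.sqrt_nonneg A) hω 2
      rw [h3]
      calc Real.sqrt A ^ 2 ≤ (θ * Real.sqrt (ε' * m)) ^ 2 := h4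
        _ = θ ^ 2 * (Real.sqrt (ε' * m)) ^ 2 := by ring
        _ = θ ^ 2 * (ε' * m) := by rw [Real.sq_sqrt hεm0]
    have hrownorm : ∀ i, (enorm2 (Matrix.vecMul (R i ω) V)) ^ 2
        = ∑ j, ((Matrix.of (fun a b => R a ω b) * V) i j) ^ 2 := by
      intro i
      have hnn : (0:ℝ) ≤ ∑ j, (Matrix.vecMul (R i ω) V j) ^ 2 :=
        Finset.sum_nonneg fun j _ => sq_nonneg _
      rw [enorm2, Real.sq_sqrt hnn]
      refine Finset.sum_congr rfl fun j _ => ?_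
      simp [Matrix.mul_apply, Matrix.vecMul, dotProduct]
    set B := Finset.univ.filter (fun i => θ < enorm2 (Matrix.vecMul (R i ω) V)) with hB
    have hBcard : B.card ≤ r := by
      have h5 : (B.card : ℝ) * θ ^ 2 ≤ A := by
        calc (B.card : ℝ) * θ ^ 2 = ∑ _i ∈ B, θ ^ 2 := by
              rw [Finset.sum_const, nsmul_eq_mul]
          _ ≤ ∑ i ∈ B, (enorm2 (Matrix.vecMul (R i ω) V)) ^ 2 := by
              refine Finset.sum_le_sum fun i hi => ?_
              have := (Finset.mem_filter.mp hi).2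
              have h0 : (0:ℝ) ≤ θ := hθ.le
              nlinarith
          _ ≤ ∑ i, (enorm2 (Matrix.vecMul (R i ω) V)) ^ 2 := by
              refine Finset.sum_le_sum_of_subset_of_nonneg (Finset.subset_univ B)
                fun i _ _ => sq_nonneg _
          _ = A := by rw [hA]; exact Finset.sum_congr rfl fun i _ => hrownorm i
      have hθ2 : (0:ℝ) < θ ^ 2 := by positivity
      have h6 : (B.card : ℝ) * θ ^ 2 ≤ (ε' * m) * θ ^ 2 := by nlinarith
      exact Nat.le_floor (le_of_mul_le_mul_right h6 hθ2)
    have hBc : t ≤ Bᶜ.card := by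
      rw [Finset.card_compl, Fintype.card_fin]
      exact Nat.sub_le_sub_left hBcard m
    obtain ⟨S, hSsub, hScard⟩ := Finset.exists_subset_card_eq hBc
    refine Set.mem_iUnion₂.mpr ⟨S, ?_, ?_⟩
    · exact Finset.mem_powersetCard.mpr ⟨Finset.subset_univ S, hScard⟩
    · refine Set.mem_iInter₂.mpr fun i hi => ?_
      have hic := hSsub hi
      rw [Finset.mem_compl, hB, Finset.mem_filter] at hic
      push_neg at hic
      exact hic (Finset.mem_univ i)
  have hterm : ∀ S ∈ Finset.powersetCard t (Finset.univ : Finset (Fin m)),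
      μ (⋂ i ∈ S, (R i) ⁻¹' C) ≤ q ^ t := by
    intro S hS
    have hScard := (Finset.mem_powersetCard.mp hS).2
    have heq : μ (⋂ i ∈ S, (R i) ⁻¹' C) = ∏ i ∈ S, μ ((R i) ⁻¹' C) :=
      hindep.meas_biInter (fun i _ => ⟨C, hCmeas, rfl⟩)
    rw [heq]
    calc ∏ i ∈ S, μ ((R i) ⁻¹' C) ≤ ∏ _i ∈ S, q := by
          refine Finset.prod_le_prod' fun i _ => ?_
          exact hrow i
      _ = q ^ t := by rw [Finset.prod_const, hScard]
  calc μ {ω | Real.sqrt (∑ i, ∑ j, ((Matrix.of (fun a b => R a ω b) * V) i j) ^ 2)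
          ≤ θ * Real.sqrt (ε' * m)}
      ≤ μ (⋃ S ∈ Finset.powersetCard t (Finset.univ : Finset (Fin m)),
          ⋂ i ∈ S, (R i) ⁻¹' C) := measure_mono hsub
    _ ≤ ∑ S ∈ Finset.powersetCard t (Finset.univ : Finset (Fin m)),
          μ (⋂ i ∈ S, (R i) ⁻¹' C) := measure_biUnion_finset_le _ _
    _ ≤ ∑ _S ∈ Finset.powersetCard t (Finset.univ : Finset (Fin m)), q ^ t :=
        Finset.sum_le_sum hterm
    _ = (m.choose t : ℝ≥0∞) * q ^ t := by
        rw [Finset.sum_const, Finset.card_powersetCard, Finset.card_univ, Fintype.card_fin,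
          nsmul_eq_mul]
    _ = (m.choose r : ℝ≥0∞) * q ^ t := by rw [Nat.choose_symm hrm']
    _ ≤ (m.choose r : ℝ≥0∞) * q ^ ((1 - ε') * m : ℝ) := by
        refine mul_le_mul_right ?_ _
        rw [← ENNReal.rpow_natCast]
        exact ENNReal.rpow_le_rpow_of_exponent_ge hq1.le htm
    _ ≤ (m.choose r : ℝ≥0∞) * (m + 1 : ℝ≥0∞) * q ^ ((1 - ε') * m : ℝ) := by
        rw [mul_assoc]
        refine mul_le_mul_right ?_ _
        exact le_mul_of_one_le_left zero_le le_add_self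
end
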